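/- arXiv:2404.15727 — 7 statements merged into one kernel-verified Lean document; each statement's English description precedes it below -/
import Mathlib

section
/- Let n ≥ 1, 0 ≤ k ≤ n, and let σ, σ' ∈ S_k^n be two strictly increasing maps {0,…,k} → {0,…,n}. Then k! · ∫_{F_{σ'}} ω_σ = δ_{σ,σ'}, i.e. the integral of the Whitney form ω_σ over the k-subsimplex F_{σ'} (with ordered vertices v_{σ'(0)},…,v_{σ'(k)}) equals 1/k! if σ = σ' and 0 otherwise. -/
open MeasureTheory Matrix

noncomputable section

/-- A differential `k`-form on `ℝⁿ`, recorded via its pointwise evaluation on `k`-tuples of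
vectors: `ω x (u 0, …, u (k-1)) : ℝ`. -/
abbrev Form (n k : ℕ) : Type := (Fin n → ℝ) → (Fin k → (Fin n → ℝ)) → ℝ

/-- `ω` is a polynomial differential form: all coefficient functions are polynomial. -/
def IsPolyForm {n k : ℕ} (ω : Form n k) : Prop :=
  ∀ u : Fin k → (Fin n → ℝ), ∃ p : MvPolynomial (Fin n) ℝ,
    ∀ x, ω x u = MvPolynomial.eval x p

/-- `ω` is a polynomial differential form of degree at most `r`. -/
def IsPolyFormDeg {n k : ℕ} (r : ℕ) (ω : Form n k) : Prop :=
  ∀ u : Fin k → (Fin n → ℝ), ∃ p : MvPolynomial (Fin n) ℝ,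
    p.totalDegree ≤ r ∧ ∀ x, ω x u = MvPolynomial.eval x p

/-- `ω` is a continuous differential form. -/
def ContinuousForm {n k : ℕ} (ω : Form n k) : Prop :=
  ∀ u : Fin k → (Fin n → ℝ), Continuous fun x => ω x u

/-- The standard `k`-simplex `Δᵏ = {x ∈ ℝᵏ : xⱼ ≥ 0, Σⱼ xⱼ ≤ 1}`. -/
def stdSimplexSet (k : ℕ) : Set (Fin k → ℝ) :=
  {x | (∀ j, 0 ≤ x j) ∧ ∑ j, x j ≤ 1}

/-- Integral of the `k`-form `ω` over the affine `k`-simplex with ordered vertices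
`p 0, …, p k`:  `∫_{Δᵏ} ω(p₀ + Σⱼ xⱼ (pⱼ − p₀))(p₁ − p₀, …, p_k − p₀) dx`. -/
def simpIntegral {n k : ℕ} (ω : Form n k) (p : Fin (k + 1) → (Fin n → ℝ)) : ℝ :=
  ∫ x in stdSimplexSet k,
    ω (p 0 + ∑ j : Fin k, x j • (p j.succ - p 0)) (fun j => p j.succ - p 0)

/-- The Whitney form `ω_σ = Σᵢ (−1)ⁱ λ_{σ(i)} dλ_{σ(0)} ∧ … ∧ ω̂ᵢ ∧ … ∧ dλ_{σ(k)}`, where the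
wedge of the (constant) differentials `dλⱼ` is evaluated as a determinant. -/
def whitney {n k : ℕ} (lam : Fin (n + 1) → ((Fin n → ℝ) →ᵃ[ℝ] ℝ))
    (σ : Fin (k + 1) → Fin (n + 1)) : Form n k :=
  fun x u => ∑ i : Fin (k + 1), (-1 : ℝ) ^ (i : ℕ) * lam (σ i) x *
    Matrix.det (Matrix.of fun a b : Fin k => (lam (σ (i.succAbove a))).linear (u b))

/-- `λ^α ω_σ`, the Whitney form scaled by the barycentric monomial `λ^α`. -/
def scaledWhitney {n k : ℕ} (lam : Fin (n + 1) → ((Fin n → ℝ) →ᵃ[ℝ] ℝ))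
    (α : Fin (n + 1) → ℕ) (σ : Fin (k + 1) → Fin (n + 1)) : Form n k :=
  fun x u => (∏ i, lam i x ^ α i) * whitney lam σ x u

/-- The space `P_r^- Λ^k(T)`: the span of `p · ω_σ` for `p` a polynomial of degree `≤ r − 1`
and `σ` strictly increasing. -/
def PrMinus (n k r : ℕ) (lam : Fin (n + 1) → ((Fin n → ℝ) →ᵃ[ℝ] ℝ)) :
    Submodule ℝ (Form n k) :=
  Submodule.span ℝ {η : Form n k | ∃ (p : MvPolynomial (Fin n) ℝ)
    (σ : Fin (k + 1) → Fin (n + 1)), StrictMono σ ∧ p.totalDegree ≤ r - 1 ∧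
    η = fun x u => MvPolynomial.eval x p * whitney lam σ x u}

/-- The small `k`-simplex `s_{(α,σ)}`, given by its ordered vertices
`(v_{σ(j)} + Σᵢ αᵢ vᵢ)/r`. -/
def smallSimplex {n k : ℕ} (v : Fin (n + 1) → (Fin n → ℝ)) (r : ℕ)
    (σ : Fin (k + 1) → Fin (n + 1)) (α : Fin (n + 1) → ℕ) :
    Fin (k + 1) → (Fin n → ℝ) :=
  fun j => (r : ℝ)⁻¹ • (v (σ j) + ∑ i, (α i : ℝ) • v i)

/-- The index set of the minimal set `X_{r,min}^k(T)`: pairs `(σ, α)` with `σ` strictly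
increasing, `|α| = r − 1` and `αᵢ = 0` for every `i < σ(0)`. -/
def MinIdx (n k r : ℕ) : Type :=
  {q : (Fin (k + 1) → Fin (n + 1)) × (Fin (n + 1) → ℕ) //
    StrictMono q.1 ∧ (∑ i, q.2 i) = r - 1 ∧ ∀ i, i < q.1 0 → q.2 i = 0}

/-- The interpolation operator `Π ω = Σᵢ (∫_{sᵢ} ω) ω_{sᵢ}` built from a dual family `ωs`. -/
def lagrangeProj {n k N : ℕ} (s : Fin N → Fin (k + 1) → (Fin n → ℝ))
    (ωs : Fin N → Form n k) (ω : Form n k) : Form n k :=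
  fun x u => ∑ i, simpIntegral ω (s i) * ωs i x u

/-- Least squares error functional `Σᵢ (∫_{sᵢ} (η − ω))²`. -/
def lsError {n k M : ℕ} (s : Fin M → Fin (k + 1) → (Fin n → ℝ))
    (ω η : Form n k) : ℝ :=
  ∑ i, (simpIntegral (η - ω) (s i)) ^ 2

open Pointwise

lemma isClosed_stdSimplexSet (k : ℕ) : IsClosed (stdSimplexSet k) := by
  have h1 : IsClosed {x : Fin k → ℝ | ∀ j, 0 ≤ x j} := by
    have : {x : Fin k → ℝ | ∀ j, 0 ≤ x j} = ⋂ j, {x : Fin k → ℝ | 0 ≤ x j} := by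
      ext x; simp
    rw [this]
    exact isClosed_iInter fun j => isClosed_le continuous_const (continuous_apply j)
  have h2 : IsClosed {x : Fin k → ℝ | ∑ j, x j ≤ 1} :=
    isClosed_le (by continuity) continuous_const
  exact h1.inter h2

lemma measurableSet_stdSimplexSet (k : ℕ) : MeasurableSet (stdSimplexSet k) :=
  (isClosed_stdSimplexSet k).measurableSet

lemma stdSimplexSet_nonempty (k : ℕ) : (stdSimplexSet k).Nonempty :=
  ⟨0, fun j => le_refl 0, by simp⟩

lemma smul_stdSimplexSet {k : ℕ} {c : ℝ} (hc : 0 ≤ c) :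
    c • stdSimplexSet k = {y : Fin k → ℝ | (∀ j, 0 ≤ y j) ∧ ∑ j, y j ≤ c} := by
  rcases hc.eq_or_lt with h | h
  · rw [← h, Set.zero_smul_set (stdSimplexSet_nonempty k)]
    ext y
    simp only [Set.mem_zero, Set.mem_setOf_eq]
    constructor
    · rintro rfl; simp
    · rintro ⟨h1, h2⟩
      funext j
      have : y j ≤ 0 := le_trans (Finset.single_le_sum (f := y) (fun i _ => h1 i) (Finset.mem_univ j)) h2
      exact le_antisymm this (h1 j)
  · ext y
    constructor
    · rintro ⟨z, ⟨hz1, hz2⟩, rfl⟩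
      refine ⟨fun j => mul_nonneg h.le (hz1 j), ?_⟩
      simp only [Pi.smul_apply, smul_eq_mul, ← Finset.mul_sum]
      calc c * ∑ j, z j ≤ c * 1 := by nlinarith
        _ = c := mul_one c
    · rintro ⟨h1, h2⟩
      refine ⟨c⁻¹ • y, ⟨fun j => mul_nonneg (inv_nonneg.2 hc) (h1 j), ?_⟩, smul_inv_smul₀ h.ne' y⟩
      simp only [Pi.smul_apply, smul_eq_mul, ← Finset.mul_sum]
      rw [inv_mul_le_iff₀ h, mul_one]
      exact h2

lemma volume_stdSimplexSet (k : ℕ) :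
    volume (stdSimplexSet k) = ENNReal.ofReal (1 / k.factorial) := by
  induction k with
  | zero =>
    have : stdSimplexSet 0 = Set.univ := by
      ext x; simp [stdSimplexSet]
    rw [this, volume_pi, Measure.pi_univ]
    simp [Nat.factorial]
  | succ k ih =>
    set V := volume (stdSimplexSet k) with hV
    have hmp := measurePreserving_piFinSuccAbove (fun _ : Fin (k+1) => (volume : Measure ℝ)) 0
    set T : Set (ℝ × (Fin k → ℝ)) :=
      {p | 0 ≤ p.1 ∧ (∀ j, 0 ≤ p.2 j) ∧ p.1 + ∑ j, p.2 j ≤ 1} with hTdef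
    have hT : MeasurableSet T := by
      have h1 : MeasurableSet {p : ℝ × (Fin k → ℝ) | 0 ≤ p.1} :=
        measurableSet_le measurable_const measurable_fst
      have h2 : MeasurableSet {p : ℝ × (Fin k → ℝ) | ∀ j, 0 ≤ p.2 j} := by
        have : {p : ℝ × (Fin k → ℝ) | ∀ j, 0 ≤ p.2 j}
            = ⋂ j, {p : ℝ × (Fin k → ℝ) | 0 ≤ p.2 j} := by ext p; simp
        rw [this]
        exact MeasurableSet.iInter fun j =>
          measurableSet_le measurable_const measurable_snd.eval
      have h3 : MeasurableSet {p : ℝ × (Fin k → ℝ) | p.1 + ∑ j, p.2 j ≤ 1} := by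
        refine measurableSet_le ?_ measurable_const
        exact measurable_fst.add (Finset.measurable_sum _ fun j _ => measurable_snd.eval)
      exact (h1.inter (h2.inter h3))
    have hpre : (MeasurableEquiv.piFinSuccAbove (fun _ : Fin (k+1) => ℝ) 0) ⁻¹' T
        = stdSimplexSet (k+1) := by
      ext x
      simp only [Set.mem_preimage, hTdef, Set.mem_setOf_eq,
        MeasurableEquiv.piFinSuccAbove_apply, stdSimplexSet, Fin.succAbove_zero]
      rw [Fin.sum_univ_succ]
      constructor
      · rintro ⟨h0, h1, h2⟩
        exact ⟨fun j => Fin.cases h0 h1 j, h2⟩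
      · rintro ⟨h1, h2⟩
        exact ⟨h1 0, fun j => h1 j.succ, h2⟩
    have h1 : volume (stdSimplexSet (k+1))
        = ((volume : Measure ℝ).prod (volume : Measure (Fin k → ℝ))) T := by
      rw [← hpre]
      exact hmp.measure_preimage hT.nullMeasurableSet
    have h3 : ∀ t : ℝ, volume (Prod.mk t ⁻¹' T)
        = (Set.Icc (0:ℝ) 1).indicator (fun t => ENNReal.ofReal ((1-t)^k) * V) t := by
      intro t
      by_cases ht : t ∈ Set.Icc (0:ℝ) 1
      · obtain ⟨ht0, ht1⟩ := ht
        have hslice : Prod.mk t ⁻¹' T = (1-t) • stdSimplexSet k := by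
          rw [smul_stdSimplexSet (by linarith : (0:ℝ) ≤ 1 - t)]
          ext y
          simp only [Set.mem_preimage, hTdef, Set.mem_setOf_eq]
          constructor
          · rintro ⟨_, hy, hs⟩; exact ⟨hy, by linarith⟩
          · rintro ⟨hy, hs⟩; exact ⟨ht0, hy, by linarith⟩
        rw [Set.indicator_of_mem (show t ∈ Set.Icc (0:ℝ) 1 from ⟨ht0, ht1⟩), hslice,
          Measure.addHaar_smul_of_nonneg volume (by linarith : (0:ℝ) ≤ 1 - t),
          Module.finrank_fin_fun]
      · rw [Set.indicator_of_notMem ht]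
        have : Prod.mk t ⁻¹' T = ∅ := by
          ext y
          simp only [Set.mem_preimage, hTdef, Set.mem_setOf_eq, Set.mem_empty_iff_false,
            iff_false, not_and]
          intro h0 hy
          have hsum : 0 ≤ ∑ j, y j := Finset.sum_nonneg fun j _ => hy j
          simp only [Set.mem_Icc, not_and, not_le] at ht
          have := ht h0
          intro hle
          linarith
        rw [this, measure_empty]
    have hlin : ∫⁻ t in Set.Icc (0:ℝ) 1, ENNReal.ofReal ((1-t)^k)
        = ENNReal.ofReal (1/(k+1)) := by
      have hint : IntegrableOn (fun t : ℝ => (1-t)^k) (Set.Icc (0:ℝ) 1) :=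
        (Continuous.integrableOn_Icc (by continuity))
      have hnn : 0 ≤ᵐ[volume.restrict (Set.Icc (0:ℝ) 1)] fun t : ℝ => (1-t)^k := by
        refine (ae_restrict_iff' measurableSet_Icc).2 (Filter.Eventually.of_forall ?_)
        rintro t ⟨h0, h1⟩
        exact pow_nonneg (by linarith) k
      rw [← ofReal_integral_eq_lintegral_ofReal hint hnn]
      congr 1
      rw [MeasureTheory.integral_Icc_eq_integral_Ioc,
        ← intervalIntegral.integral_of_le (zero_le_one)]
      rw [intervalIntegral.integral_comp_sub_left (fun s => s ^ k) 1]
      simp [integral_pow]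
    rw [h1, Measure.prod_apply hT]
    rw [lintegral_congr h3, lintegral_indicator measurableSet_Icc _,
      lintegral_mul_const' _ _ (show V ≠ ⊤ by rw [ih]; exact ENNReal.ofReal_ne_top), hlin, ih,
      ← ENNReal.ofReal_mul (by positivity)]
    congr 1
    rw [Nat.factorial_succ]
    push_cast
    rw [div_mul_div_comm, one_mul]

theorem strictMono_eq_of_ne_imp {k n : ℕ} (σ σ' : Fin (k+1) → Fin (n+1))
    (hσ : StrictMono σ) (hσ' : StrictMono σ') (hall : ∀ i, σ' i ∈ Set.range σ) :
    σ = σ' := by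
  have hsub : Finset.univ.image σ' ⊆ Finset.univ.image σ := by
    intro m hm
    simp only [Finset.mem_image, Finset.mem_univ, true_and] at hm ⊢
    obtain ⟨i, rfl⟩ := hm
    obtain ⟨j, hj⟩ := hall i
    exact ⟨j, hj⟩
  have hcard : (Finset.univ.image σ).card ≤ (Finset.univ.image σ').card := by
    rw [Finset.card_image_of_injective _ hσ.injective,
      Finset.card_image_of_injective _ hσ'.injective]
  have heq := Finset.eq_of_subset_of_card_le hsub hcard
  have hrange : Set.range σ = Set.range σ' := by
    have h1 : Set.range σ = ↑(Finset.univ.image σ) := by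
      ext m; simp
    have h2 : Set.range σ' = ↑(Finset.univ.image σ') := by
      ext m; simp
    rw [h1, h2, heq]
  haveI : WellFoundedLT (Fin (k+1)) := inferInstance
  exact (StrictMono.range_inj hσ hσ').1 hrange

theorem whitney_eval {n k : ℕ}
    (v : Fin (n + 1) → (Fin n → ℝ))
    (lam : Fin (n + 1) → ((Fin n → ℝ) →ᵃ[ℝ] ℝ))
    (hlam : ∀ i j, lam i (v j) = if i = j then 1 else 0)
    (σ σ' : Fin (k + 1) → Fin (n + 1)) (hσ : StrictMono σ) (hσ' : StrictMono σ')
    (x : Fin k → ℝ) :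
    whitney lam σ (v (σ' 0) + ∑ j : Fin k, x j • (v (σ' j.succ) - v (σ' 0)))
      (fun j => v (σ' j.succ) - v (σ' 0)) = if σ = σ' then 1 else 0 := by
  set P : Fin n → ℝ := v (σ' 0) + ∑ j : Fin k, x j • (v (σ' j.succ) - v (σ' 0)) with hPdef
  set U : Fin k → (Fin n → ℝ) := fun j => v (σ' j.succ) - v (σ' 0) with hUdef
  have hL : ∀ (m a b : Fin (n+1)), (lam m).linear (v a - v b)
      = (if m = a then (1:ℝ) else 0) - (if m = b then 1 else 0) := by
    intro m a b
    have h := (lam m).linearMap_vsub (v a) (v b)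
    rw [vsub_eq_sub, vsub_eq_sub] at h
    rw [h, hlam, hlam]
  have hP : ∀ m : Fin (n+1), lam m P = (if m = σ' 0 then (1:ℝ) else 0)
      + ∑ j : Fin k, x j * ((if m = σ' j.succ then (1:ℝ) else 0)
        - (if m = σ' 0 then 1 else 0)) := by
    intro m
    have h1 : P = (∑ j : Fin k, x j • (v (σ' j.succ) - v (σ' 0))) +ᵥ v (σ' 0) := by
      rw [hPdef, vadd_eq_add, add_comm]
    rw [h1, AffineMap.map_vadd, vadd_eq_add]
    rw [map_sum]
    simp only [LinearMap.map_smul, smul_eq_mul]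
    rw [hlam, add_comm]
    congr 1
    refine Finset.sum_congr rfl fun j _ => ?_
    rw [hL]
  -- the three matrices
  set C : Matrix (Fin (k+1)) (Fin (k+1)) ℝ :=
    Matrix.of fun i j => if σ j = σ' i then (1:ℝ) else 0 with hC
  set E : Matrix (Fin (k+1)) (Fin (k+1)) ℝ :=
    Matrix.of (Fin.cons (Fin.cons (1 - ∑ b, x b) x)
      (fun i => Fin.cons (-1) (fun b => if (i : Fin k) = b then (1:ℝ) else 0))) with hE
  set A : Matrix (Fin (k+1)) (Fin (k+1)) ℝ :=
    Matrix.of (Fin.cons (fun j => lam (σ j) P)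
      (fun b j => (lam (σ j)).linear (U b))) with hA
  have claim1 : A.det = whitney lam σ P U := by
    rw [Matrix.det_succ_row_zero]
    simp only [whitney]
    refine Finset.sum_congr rfl fun i _ => ?_
    have hA0 : A 0 i = lam (σ i) P := rfl
    rw [hA0]
    congr 1
    rw [← Matrix.det_transpose]
    congr 1
  have claim2 : A = E * C := by
    ext i j
    rw [Matrix.mul_apply]
    refine Fin.cases ?_ (fun a => ?_) i
    · have hA0 : A 0 j = lam (σ j) P := rfl
      rw [hA0, hP (σ j), Fin.sum_univ_succ]
      simp only [hE, hC, Matrix.of_apply, Fin.cons_zero, Fin.cons_succ]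
      simp only [mul_sub, sub_mul, Finset.sum_sub_distrib, Finset.sum_mul]
      ring
    · have hAs : A a.succ j = (lam (σ j)).linear (U a) := rfl
      rw [hAs, hUdef, hL, Fin.sum_univ_succ]
      simp only [hE, hC, Matrix.of_apply, Fin.cons_succ, Fin.cons_zero]
      simp only [ite_mul, one_mul, zero_mul, Finset.sum_ite_eq, Finset.mem_univ, if_pos]
      ring
  have claim3 : E.det = 1 := by
    set E' : Matrix (Fin (k+1)) (Fin (k+1)) ℝ :=
      Matrix.of (Fin.cons (Fin.cons 1 (fun _ => (0:ℝ)))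
        (fun i => Fin.cons (-1) (fun b => if (i : Fin k) = b then (1:ℝ) else 0))) with hE'
    have hupd : E = E'.updateRow 0 (∑ i, (Fin.cons 1 x : Fin (k+1) → ℝ) i • E' i) := by
      ext i j
      refine Fin.cases ?_ (fun a => ?_) i
      · rw [Matrix.updateRow_self, Finset.sum_apply]
        refine Fin.cases ?_ (fun b => ?_) j
        · rw [Fin.sum_univ_succ]
          simp only [Pi.smul_apply, smul_eq_mul, Fin.cons_zero, Fin.cons_succ, hE, hE',
            Matrix.of_apply]
          simp [sub_eq_add_neg]
        · rw [Fin.sum_univ_succ]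
          simp only [Pi.smul_apply, smul_eq_mul, Fin.cons_zero, Fin.cons_succ, hE, hE',
            Matrix.of_apply]
          simp [mul_ite, mul_one, mul_zero, Finset.sum_ite_eq']
      · rw [Matrix.updateRow_ne (Fin.succ_ne_zero a)]
        rfl
    rw [hupd, Matrix.det_updateRow_sum]
    have hc0 : (Fin.cons 1 x : Fin (k+1) → ℝ) 0 = 1 := rfl
    rw [hc0, one_smul]
    rw [Matrix.det_succ_row_zero, Fin.sum_univ_succ]
    have h0 : E' 0 0 = 1 := rfl
    have hs : ∀ j : Fin k, E' 0 j.succ = 0 := fun j => rfl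
    have hsub : E'.submatrix Fin.succ (Fin.succAbove 0) = 1 := by
      ext a b
      have : E'.submatrix Fin.succ (Fin.succAbove 0) a b = if (a : Fin k) = b then (1:ℝ) else 0 := rfl
      rw [this, Matrix.one_apply]
    simp only [h0, hs, mul_zero, zero_mul, mul_one, Finset.sum_const_zero, add_zero, hsub,
      Matrix.det_one]
    norm_num
  have claim4 : C.det = if σ = σ' then 1 else 0 := by
    by_cases hss : σ = σ'
    · subst hss
      have : C = 1 := by
        ext i j
        simp only [hC, Matrix.of_apply, Matrix.one_apply]
        by_cases h : i = j
        · subst h; simp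
        · rw [if_neg (fun hh => h (hσ.injective hh).symm), if_neg h]
      rw [this, Matrix.det_one, if_pos rfl]
    · rw [if_neg hss]
      have hex : ∃ i, σ' i ∉ Set.range σ := by
        by_contra hno
        push_neg at hno
        exact hss (strictMono_eq_of_ne_imp σ σ' hσ hσ' hno)
      obtain ⟨i0, hi0⟩ := hex
      refine Matrix.det_eq_zero_of_row_eq_zero i0 fun j => ?_
      simp only [hC, Matrix.of_apply]
      rw [if_neg]
      intro hh
      exact hi0 ⟨j, hh⟩
  rw [← claim1, claim2, Matrix.det_mul, claim3, one_mul, claim4]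

/-- Duality of lowest-order Whitney forms with subsimplex integration:
`k! ∫_{F_{σ'}} ω_σ = δ_{σ,σ'}`. -/
theorem whitney_integral_dual {n k : ℕ} (hn : 1 ≤ n) (hk : k ≤ n)
    (v : Fin (n + 1) → (Fin n → ℝ)) (hv : AffineIndependent ℝ v)
    (lam : Fin (n + 1) → ((Fin n → ℝ) →ᵃ[ℝ] ℝ))
    (hlam : ∀ i j, lam i (v j) = if i = j then 1 else 0)
    (σ σ' : Fin (k + 1) → Fin (n + 1)) (hσ : StrictMono σ) (hσ' : StrictMono σ') :
    (Nat.factorial k : ℝ) * simpIntegral (whitney lam σ) (fun j => v (σ' j)) =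
      if σ = σ' then 1 else 0 := by
  have hconst : ∀ x : Fin k → ℝ,
      whitney lam σ (v (σ' 0) + ∑ j : Fin k, x j • (v (σ' j.succ) - v (σ' 0)))
        (fun j => v (σ' j.succ) - v (σ' 0)) = if σ = σ' then 1 else 0 :=
    fun x => whitney_eval v lam hlam σ σ' hσ hσ' x
  unfold simpIntegral
  rw [integral_congr_ae (Filter.Eventually.of_forall fun x => hconst x)]
  rw [setIntegral_const, measureReal_def, volume_stdSimplexSet k,
    ENNReal.toReal_ofReal (by positivity), smul_eq_mul]
  split_ifs with h
  · rw [mul_one]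
    field_simp
  · rw [mul_zero, mul_zero]
end
end

section
/- (Basis theorem for high-order Whitney forms.) Let n ≥ 1, 0 ≤ k ≤ n and r ≥ 1. For each σ ∈ S_k^n let I_σ := {α ∈ I(n+1, r−1) : α_i = 0 for all i < σ(0)}. Then the set {λ^α ω_σ : σ ∈ S_k^n, α ∈ I_σ} is a basis of P_r^− Λ^k(T): these polynomial k-forms are linearly independent and they span P_r^− Λ^k(T). -/
open MeasureTheory Matrix

noncomputable section

namespace SWB
open MvPolynomial

variable {n k r : ℕ}

/-- Two affine maps agreeing on the vertices of a nondegenerate simplex agree. -/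
lemma affine_ext (hn : 1 ≤ n) (v : Fin (n + 1) → (Fin n → ℝ)) (hv : AffineIndependent ℝ v)
    {W : Type*} [AddCommGroup W] [Module ℝ W]
    (f g : (Fin n → ℝ) →ᵃ[ℝ] W) (h : ∀ j, f (v j) = g (v j)) : f = g := by
  have li0 : LinearIndependent ℝ fun i : {x : Fin (n+1) // x ≠ 0} => v i -ᵥ v 0 :=
    (affineIndependent_iff_linearIndependent_vsub ℝ v 0).mp hv
  have inj : Function.Injective (fun j : Fin n => (⟨j.succ, Fin.succ_ne_zero j⟩ : {x : Fin (n+1) // x ≠ 0})) :=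
    fun a b hab => Fin.succ_injective _ (congrArg Subtype.val hab)
  have li : LinearIndependent ℝ fun j : Fin n => v j.succ - v 0 := by
    have := li0.comp _ inj
    simpa [vsub_eq_sub, Function.comp_def] using this
  haveI : Nonempty (Fin n) := ⟨⟨0, hn⟩⟩
  have hspan : Submodule.span ℝ (Set.range fun j : Fin n => v j.succ - v 0) = ⊤ :=
    li.span_eq_top_of_card_eq_finrank (by simp [Module.finrank_fin_fun])
  have hlin : f.linear = g.linear := by
    apply LinearMap.ext_on hspan
    rintro x ⟨j, rfl⟩
    have h1 : f.linear (v j.succ -ᵥ v 0) = g.linear (v j.succ -ᵥ v 0) := by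
      rw [AffineMap.linearMap_vsub, AffineMap.linearMap_vsub, h, h]
    simpa [vsub_eq_sub] using h1
  apply AffineMap.ext
  intro x
  have hx : x = (x -ᵥ v 0) +ᵥ v 0 := (vsub_vadd x (v 0)).symm
  rw [hx, AffineMap.map_vadd, AffineMap.map_vadd, hlin, h]

/-- sum of barycentric coordinates is 1 -/
lemma lam_sum (hn : 1 ≤ n) (v : Fin (n + 1) → (Fin n → ℝ)) (hv : AffineIndependent ℝ v)
    (lam : Fin (n + 1) → ((Fin n → ℝ) →ᵃ[ℝ] ℝ))
    (hlam : ∀ i j, lam i (v j) = if i = j then 1 else 0) (x : Fin n → ℝ) :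
    ∑ i, lam i x = 1 := by
  classical
  let F : (Fin n → ℝ) →ᵃ[ℝ] ℝ :=
    { toFun := fun y => ∑ i, lam i y
      linear := ∑ i, (lam i).linear
      map_vadd' := by
        intro p w
        show ∑ i, lam i (w +ᵥ p) = _
        have h1 : ∀ i, lam i (w +ᵥ p) = (lam i).linear w + lam i p := fun i => AffineMap.map_vadd _ _ _
        simp only [h1, Finset.sum_add_distrib, LinearMap.coe_sum, Finset.sum_apply]
        rfl }
  have key := affine_ext hn v hv F (AffineMap.const ℝ (Fin n → ℝ) (1:ℝ)) ?_
  · have hx : F x = AffineMap.const ℝ (Fin n → ℝ) (1:ℝ) x := by rw [key]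
    simpa [F] using hx
  · intro j
    show ∑ i, lam i (v j) = _
    simp [hlam, Finset.sum_ite_eq]

/-- every point is the barycentric combination of the vertices -/
lemma lam_coord (hn : 1 ≤ n) (v : Fin (n + 1) → (Fin n → ℝ)) (hv : AffineIndependent ℝ v)
    (lam : Fin (n + 1) → ((Fin n → ℝ) →ᵃ[ℝ] ℝ))
    (hlam : ∀ i j, lam i (v j) = if i = j then 1 else 0) (x : Fin n → ℝ) (m : Fin n) :
    x m = ∑ i, lam i x * v i m := by
  classical
  let L : (Fin n → ℝ) →ₗ[ℝ] ℝ :=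
    { toFun := fun y => ∑ i, (lam i).linear y * v i m
      map_add' := by intro a b; simp [map_add, add_mul, Finset.sum_add_distrib]
      map_smul' := by intro c a; simp [_root_.map_smul, smul_eq_mul, mul_assoc, Finset.mul_sum]
    }
  let F : (Fin n → ℝ) →ᵃ[ℝ] ℝ :=
    { toFun := fun y => ∑ i, lam i y * v i m
      linear := L
      map_vadd' := by
        intro p w
        show ∑ i, lam i (w +ᵥ p) * v i m = _
        have h1 : ∀ i, lam i (w +ᵥ p) = (lam i).linear w + lam i p := fun i => AffineMap.map_vadd _ _ _
        simp only [h1, add_mul, Finset.sum_add_distrib]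
        rfl
    }
  let G : (Fin n → ℝ) →ᵃ[ℝ] ℝ :=
    { toFun := fun y => y m
      linear := LinearMap.proj m
      map_vadd' := by intro p w; rfl }
  have key := affine_ext hn v hv G F ?_
  · exact congrFun (congrArg (fun (f : (Fin n → ℝ) →ᵃ[ℝ] ℝ) => (f : (Fin n → ℝ) → ℝ)) key) x
  · intro j
    show v j m = ∑ i, lam i (v j) * v i m
    simp [hlam]

lemma lam_surj (v : Fin (n + 1) → (Fin n → ℝ))
    (lam : Fin (n + 1) → ((Fin n → ℝ) →ᵃ[ℝ] ℝ))
    (hlam : ∀ i j, lam i (v j) = if i = j then 1 else 0)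
    (y : Fin (n+1) → ℝ) (hy : ∑ i, y i = 1) : ∃ x, ∀ i, lam i x = y i := by
  classical
  refine ⟨(Finset.univ.affineCombination ℝ v) y, fun i => ?_⟩
  have h1 := Finset.map_affineCombination Finset.univ v y (by simpa using hy) (lam i)
  rw [h1, Finset.affineCombination_eq_linear_combination _ _ _ (by simpa using hy)]
  simp [Function.comp, hlam, mul_ite, Finset.sum_ite_eq']


/-- polynomial representing the affine map `lam i` -/
def lamPoly (lam : Fin (n + 1) → ((Fin n → ℝ) →ᵃ[ℝ] ℝ)) (i : Fin (n+1)) : MvPolynomial (Fin n) ℝ :=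
  C (lam i 0) + ∑ j, C ((lam i).linear (fun m => if j = m then 1 else 0)) * X j

lemma eval_lamPoly (lam : Fin (n + 1) → ((Fin n → ℝ) →ᵃ[ℝ] ℝ)) (i : Fin (n+1)) (x : Fin n → ℝ) :
    MvPolynomial.eval x (lamPoly lam i) = lam i x := by
  have h0 : lam i x = (lam i).linear x + lam i 0 := by
    have := AffineMap.map_vadd (lam i) 0 x
    simpa using this
  have hx : (lam i).linear x = ∑ j, x j * (lam i).linear (fun m => if j = m then 1 else 0) := by
    conv_lhs => rw [pi_eq_sum_univ x]
    rw [map_sum]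
    congr 1; funext j
    rw [_root_.map_smul]; simp [smul_eq_mul]
  simp only [lamPoly, map_add, eval_C, map_sum, eval_mul, eval_X, h0, hx]
  ring_nf
  congr 1
  exact Finset.sum_congr rfl fun j _ => by ring

lemma totalDegree_lamPoly (lam : Fin (n + 1) → ((Fin n → ℝ) →ᵃ[ℝ] ℝ)) (i : Fin (n+1)) :
    (lamPoly lam i).totalDegree ≤ 1 := by
  apply le_trans (totalDegree_add _ _)
  simp only [max_le_iff]
  constructor
  · simp [totalDegree_C]
  · apply le_trans (totalDegree_finset_sum _ _)
    apply Finset.sup_le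
    intro j _
    apply le_trans (totalDegree_mul _ _)
    simp [totalDegree_C, totalDegree_X]

/-- Case (a) determinant: a 0/1 "matching" matrix of two strictly monotone tuples. -/
lemma det_match {N : ℕ} (τ S : Fin k → Fin N) (hτ : StrictMono τ) (hS : StrictMono S)
    (M : Matrix (Fin k) (Fin k) ℝ) (hM : ∀ a b, M a b = if τ a = S b then 1 else 0) :
    M.det = if τ = S then 1 else 0 := by
  classical
  by_cases h : τ = S
  · subst h
    rw [if_pos rfl]
    have : M = 1 := by
      ext a b
      rw [hM, Matrix.one_apply]
      by_cases hab : a = b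
      · simp [hab]
      · simp only [if_neg hab]
        rw [if_neg (fun h' => hab (hτ.injective h'))]
    rw [this, Matrix.det_one]
  · rw [if_neg h]
    -- find a row of zeros
    by_cases hsub : ∀ a, ∃ b, τ a = S b
    · exfalso
      apply h
      have hcard : (Finset.univ.image S).card = k := by
        rw [Finset.card_image_of_injective _ hS.injective, Finset.card_univ, Fintype.card_fin]
      have hτmem : ∀ a, τ a ∈ Finset.univ.image S := by
        intro a
        obtain ⟨b, hb⟩ := hsub a
        exact Finset.mem_image.mpr ⟨b, Finset.mem_univ b, hb.symm⟩
      have h1 := Finset.orderEmbOfFin_unique hcard hτmem hτ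
      have h2 := Finset.orderEmbOfFin_unique hcard (fun b => Finset.mem_image_of_mem S (Finset.mem_univ b)) hS
      rw [h1, ← h2]
    · push_neg at hsub
      obtain ⟨a, ha⟩ := hsub
      apply Matrix.det_eq_zero_of_row_eq_zero a
      intro b
      rw [hM]
      simp [ha b]


def Wmat (lam : Fin (n + 1) → ((Fin n → ℝ) →ᵃ[ℝ] ℝ)) (σ : Fin (k + 1) → Fin (n + 1))
    (x : Fin n → ℝ) (u : Fin k → (Fin n → ℝ)) : Matrix (Fin (k+1)) (Fin (k+1)) ℝ :=
  Matrix.of fun i j => Fin.cases (lam (σ i) x) (fun b => (lam (σ i)).linear (u b)) j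

lemma whitney_eq_det (lam : Fin (n + 1) → ((Fin n → ℝ) →ᵃ[ℝ] ℝ)) (σ : Fin (k + 1) → Fin (n + 1))
    (x : Fin n → ℝ) (u : Fin k → (Fin n → ℝ)) :
    whitney lam σ x u = (Wmat lam σ x u).det := by
  rw [Matrix.det_succ_column_zero]
  apply Finset.sum_congr rfl
  intro i _
  have h0 : Wmat lam σ x u i 0 = lam (σ i) x := by
    simp [Wmat]
  have h1 : (Wmat lam σ x u).submatrix i.succAbove Fin.succ
      = Matrix.of fun a b : Fin k => (lam (σ (i.succAbove a))).linear (u b) := by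
    ext a b
    simp [Wmat, Matrix.submatrix_apply]
  rw [h0, h1]

lemma whitney_rel (lam : Fin (n + 1) → ((Fin n → ℝ) →ᵃ[ℝ] ℝ)) (τ : Fin (k+2) → Fin (n+1))
    (x : Fin n → ℝ) (u : Fin k → (Fin n → ℝ)) :
    ∑ j : Fin (k+2), (-1:ℝ)^(j:ℕ) * lam (τ j) x * whitney lam (fun a => τ (j.succAbove a)) x u = 0 := by
  let N : Matrix (Fin (k+2)) (Fin (k+2)) ℝ :=
    Matrix.of fun i j => Fin.cases (lam (τ i) x)
      (fun j' : Fin (k+1) => Fin.cases (lam (τ i) x) (fun b => (lam (τ i)).linear (u b)) j') j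
  have hone : (1 : Fin (k+2)) = Fin.succ 0 := rfl
  have hdet : N.det = 0 := by
    apply Matrix.det_zero_of_column_eq (i := (0 : Fin (k+2))) (j := 1)
    · intro h
      exact absurd (congrArg Fin.val h) (by simp)
    · intro i
      simp only [N, Matrix.of_apply]
      rw [hone, Fin.cases_zero, Fin.cases_succ, Fin.cases_zero]
  calc ∑ j : Fin (k+2), (-1:ℝ)^(j:ℕ) * lam (τ j) x * whitney lam (fun a => τ (j.succAbove a)) x u
      = N.det := by
        rw [Matrix.det_succ_column_zero]
        apply Finset.sum_congr rfl
        intro j _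
        have h0 : N j 0 = lam (τ j) x := by
          simp only [N, Matrix.of_apply, Fin.cases_zero]
        have h1 : N.submatrix j.succAbove Fin.succ
            = Wmat lam (fun a => τ (j.succAbove a)) x u := by
          ext a b
          simp only [N, Matrix.submatrix_apply, Matrix.of_apply, Fin.cases_succ, Wmat]
        rw [h0, h1, ← whitney_eq_det]
    _ = 0 := hdet

lemma bary_mul (lam : Fin (n + 1) → ((Fin n → ℝ) →ᵃ[ℝ] ℝ)) (x : Fin n → ℝ)
    (β : Fin (n+1) → ℕ) (t : Fin (n+1)) :
    (∏ i, lam i x ^ β i) * lam t x = ∏ i, lam i x ^ (β i + if i = t then 1 else 0) := by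
  classical
  have : ∀ i : Fin (n+1), lam i x ^ (β i + if i = t then 1 else 0)
      = lam i x ^ β i * (if i = t then lam i x else 1) := by
    intro i
    rw [pow_add]
    congr 1
    by_cases h : i = t <;> simp [h]
  rw [Finset.prod_congr rfl (fun i _ => this i), Finset.prod_mul_distrib,
    Finset.prod_ite_eq' Finset.univ t (fun i => lam i x)]
  simp

/-- the key reduction identity -/
lemma scaledWhitney_reduce (lam : Fin (n + 1) → ((Fin n → ℝ) →ᵃ[ℝ] ℝ))
    (σ : Fin (k+1) → Fin (n+1)) (α : Fin (n+1) → ℕ) (i0 : Fin (n+1)) (hα : 1 ≤ α i0) :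
    scaledWhitney lam α σ = ∑ j : Fin (k+1), ((-1:ℝ)^(j:ℕ)) •
      scaledWhitney lam (fun m => (α m - if m = i0 then 1 else 0) + if m = σ j then 1 else 0)
        (fun a => (Fin.cases i0 σ : Fin (k+2) → Fin (n+1)) ((j.succ).succAbove a)) := by
  classical
  funext x u
  set τ : Fin (k+2) → Fin (n+1) := Fin.cases i0 σ with hτ
  have hrel := whitney_rel lam τ x u
  rw [Fin.sum_univ_succ] at hrel
  have hτ0 : τ 0 = i0 := rfl
  have hτs : ∀ j : Fin (k+1), τ j.succ = σ j := fun j => by simp [hτ]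
  have hσ : (fun a => τ ((0:Fin (k+2)).succAbove a)) = σ := by
    funext a
    simp [Fin.succAbove_zero, hτ]
  rw [hσ, hτ0] at hrel
  simp only [Fin.val_zero, pow_zero, one_mul] at hrel
  -- hrel : lam i0 x * whitney lam σ x u + ∑ j, (-1)^(j.succ) * lam (τ j.succ) x * whitney ... = 0
  have hkey : lam i0 x * whitney lam σ x u
      = ∑ j : Fin (k+1), (-1:ℝ)^(j:ℕ) * lam (σ j) x *
          whitney lam (fun a => τ ((j.succ).succAbove a)) x u := by
    have := eq_neg_of_add_eq_zero_left hrel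
    rw [this, ← Finset.sum_neg_distrib]
    apply Finset.sum_congr rfl
    intro j _
    rw [hτs j]
    have : ((j.succ : Fin (k+2)) : ℕ) = (j : ℕ) + 1 := rfl
    rw [this, pow_succ]
    ring
  -- now multiply by the reduced monomial
  set β : Fin (n+1) → ℕ := fun m => α m - if m = i0 then 1 else 0 with hβ
  have hαβ : ∀ m, β m + (if m = i0 then 1 else 0) = α m := by
    intro m
    by_cases h : m = i0
    · subst h; simp [hβ, Nat.sub_add_cancel hα]
    · simp [hβ, h]
  show (∏ i, lam i x ^ α i) * whitney lam σ x u = _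
  have hprod : (∏ i, lam i x ^ α i) = (∏ i, lam i x ^ β i) * lam i0 x := by
    rw [bary_mul]
    exact Finset.prod_congr rfl fun i _ => by rw [hαβ]
  rw [hprod, mul_assoc, hkey, Finset.mul_sum]
  rw [Finset.sum_apply, Finset.sum_apply]
  apply Finset.sum_congr rfl
  intro j _
  simp only [Pi.smul_apply, smul_eq_mul]
  show (∏ i, lam i x ^ β i) * ((-1:ℝ)^(j:ℕ) * lam (σ j) x * whitney lam (fun a => τ ((j.succ).succAbove a)) x u) = _
  rw [show scaledWhitney lam (fun m => β m + if m = σ j then 1 else 0)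
      (fun a => τ ((j.succ).succAbove a)) x u
      = (∏ i, lam i x ^ (β i + if i = σ j then 1 else 0)) * whitney lam (fun a => τ ((j.succ).succAbove a)) x u from rfl]
  rw [← bary_mul]
  ring


/-- the entry of the Whitney determinant at difference vectors of vertices -/
lemma lam_entry (v : Fin (n + 1) → (Fin n → ℝ))
    (lam : Fin (n + 1) → ((Fin n → ℝ) →ᵃ[ℝ] ℝ))
    (hlam : ∀ i j, lam i (v j) = if i = j then 1 else 0) (t s : Fin (n+1)) :
    (lam t).linear (v s - v 0) =
      (if t = s then (1:ℝ) else 0) - (if t = 0 then 1 else 0) := by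
  have h := AffineMap.linearMap_vsub (lam t) (v s) (v 0)
  simp only [vsub_eq_sub] at h
  rw [h, hlam, hlam]

def dmat {n k : ℕ} (lam : Fin (n + 1) → ((Fin n → ℝ) →ᵃ[ℝ] ℝ))
    (u0 : Fin k → (Fin n → ℝ)) (σ : Fin (k+1) → Fin (n+1)) (i : Fin (k+1)) : ℝ :=
  Matrix.det (Matrix.of fun a b : Fin k => (lam (σ (i.succAbove a))).linear (u0 b))

def bmf {n : ℕ} (α : Fin (n+1) → ℕ) (t : Fin (n+1)) : Fin (n+1) → ℕ :=
  fun j => α j + if j = t then 1 else 0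

lemma dmat_eq (v : Fin (n + 1) → (Fin n → ℝ))
    (lam : Fin (n + 1) → ((Fin n → ℝ) →ᵃ[ℝ] ℝ))
    (hlam : ∀ i j, lam i (v j) = if i = j then 1 else 0)
    (σ0 σ : Fin (k+1) → Fin (n+1)) (hσ : StrictMono σ) (hσ0 : StrictMono σ0)
    (i : Fin (k+1)) (hrow : ∀ a : Fin k, σ (i.succAbove a) ≠ 0) :
    dmat lam (fun b => v (σ0 b.succ) - v 0) σ i
      = if (fun a => σ (i.succAbove a)) = (fun b => σ0 b.succ) then 1 else 0 := by
  apply det_match (fun a => σ (i.succAbove a)) (fun b => σ0 b.succ)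
    (hσ.comp (Fin.strictMono_succAbove i)) (hσ0.comp (Fin.strictMono_succ))
  intro a b
  rw [Matrix.of_apply, lam_entry v lam hlam]
  rw [if_neg (hrow a)]
  ring

/-- Step E : the triangularity statement. -/
lemma stepE (hr : 1 ≤ r)
    (v : Fin (n + 1) → (Fin n → ℝ))
    (lam : Fin (n + 1) → ((Fin n → ℝ) →ᵃ[ℝ] ℝ))
    (hlam : ∀ i j, lam i (v j) = if i = j then 1 else 0)
    (σ σ0 : Fin (k+1) → Fin (n+1)) (α α0 : Fin (n+1) → ℕ)
    (hσ : StrictMono σ) (hσ0 : StrictMono σ0)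
    (hαs : ∑ j, α j = r - 1)
    (hgood : ∀ i, i < σ 0 → α i = 0) (hgood0 : ∀ i, i < σ0 0 → α0 i = 0)
    (i : Fin (k+1))
    (hind : bmf α (σ i) = bmf α0 (σ0 0))
    (hd : dmat lam (fun b => v (σ0 b.succ) - v 0) σ i ≠ 0)
    (hne : ¬(σ = σ0 ∧ α = α0)) :
    (σ 0 : ℕ) * r + (r - 1 - α 0) < (σ0 0 : ℕ) * r + (r - 1 - α0 0) := by
  classical
  set m := σ0 0 with hm
  have heq : ∀ j, α j + (if j = σ i then 1 else 0) = α0 j + (if j = m then 1 else 0) :=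
    fun j => congrFun hind j
  -- helper : if σ 0 < m then done
  have case1 : σ 0 < m → _root_.id ((σ 0 : ℕ) * r + (r - 1 - α 0) < (m : ℕ) * r + (r - 1 - α0 0)) := by
    intro h
    have h1 : (σ 0 : ℕ) + 1 ≤ (m : ℕ) := h
    calc (σ 0 : ℕ) * r + (r - 1 - α 0) ≤ (σ 0 : ℕ) * r + (r - 1) := by omega
      _ < (σ 0 : ℕ) * r + r := by omega
      _ = ((σ 0 : ℕ) + 1) * r := by ring
      _ ≤ (m : ℕ) * r := Nat.mul_le_mul_right r h1
      _ ≤ (m : ℕ) * r + (r - 1 - α0 0) := Nat.le_add_right _ _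
  rcases lt_trichotomy (σ i) m with hlt | heqm | hgt
  · -- σ i < m : impossible
    exfalso
    have h1 := heq (σ i)
    rw [if_pos rfl, if_neg (Fin.ne_of_lt hlt), hgood0 _ hlt] at h1
    omega
  · -- σ i = m
    have hαα0 : α = α0 := by
      funext j
      have h1 := heq j
      rw [heqm] at h1
      by_cases hj : j = m
      · subst hj; simpa using h1
      · simp only [if_neg hj] at h1; omega
    by_cases hi : i = 0
    · -- then σ = σ0, contradiction with hne
      exfalso
      subst hi
      -- all rows of dmat are nonzero
      have hrow : ∀ a : Fin k, σ ((0:Fin (k+1)).succAbove a) ≠ 0 := by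
        intro a
        rw [Fin.succAbove_zero]
        have : σ 0 < σ a.succ := hσ (Fin.succ_pos a)
        exact Fin.pos_iff_ne_zero.mp (lt_of_le_of_lt (Fin.zero_le _) this)
      rw [dmat_eq v lam hlam σ0 σ hσ hσ0 0 hrow] at hd
      have hττ : (fun a => σ ((0:Fin (k+1)).succAbove a)) = (fun b => σ0 b.succ) := by
        by_contra hc
        rw [if_neg hc] at hd
        exact hd rfl
      apply hne
      constructor
      · funext a
        induction a using Fin.cases with
        | zero => exact heqm
        | succ a =>
          have := congrFun hττ a
          rw [Fin.succAbove_zero] at this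
          exact this
      · exact hαα0
    · -- i ≠ 0 : σ 0 < σ i = m
      have : σ 0 < σ i := hσ (Fin.pos_of_ne_zero hi)
      exact case1 (heqm ▸ this)
  · -- σ i > m
    have h1 := heq m
    rw [if_neg (Fin.ne_of_lt hgt), if_pos rfl] at h1
    -- h1 : α m + 0 = α0 m + 1, so α m ≥ 1
    have hαm : 1 ≤ α m := by omega
    -- goodness of q : σ 0 ≤ m
    have hσ0m : σ 0 ≤ m := by
      by_contra hc
      push_neg at hc
      have := hgood m hc
      omega
    rcases lt_or_eq_of_le hσ0m with hlt2 | heq2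
    · exact case1 hlt2
    · -- σ 0 = m
      by_cases hm0 : m = 0
      · -- m = 0 : inner induction on α 0 case
        have hm00 : σ0 0 = 0 := by rw [← hm, hm0]
        have hσ00 : σ 0 = 0 := by rw [heq2, hm0]
        have hα00 : α 0 = α0 0 + 1 := by
          have := h1
          rw [hm0] at this
          omega
        have hle : α 0 ≤ r - 1 := by
          rw [← hαs]
          exact Finset.single_le_sum (f := α) (fun j _ => Nat.zero_le _) (Finset.mem_univ 0)
        rw [hσ00, hm0]
        simp only [Fin.val_zero, Nat.zero_mul, Nat.zero_add]
        omega
      · -- m ≥ 1 : det row analysis gives contradiction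
        exfalso
        have hi : i ≠ 0 := by
          intro hi0
          rw [hi0, ← heq2] at hgt
          exact lt_irrefl _ hgt
        obtain ⟨jj, rfl⟩ := Fin.eq_succ_of_ne_zero hi
        have hkpos : 0 < k := jj.pos
        set a0 : Fin k := ⟨0, hkpos⟩ with ha0
        have hrow : ∀ a : Fin k, σ (jj.succ.succAbove a) ≠ 0 := by
          intro a
          have h2 : σ 0 ≤ σ (jj.succ.succAbove a) := hσ.monotone (Fin.zero_le _)
          intro hc
          have h6 : σ 0 = 0 := Fin.le_zero_iff.mp (hc ▸ h2)
          exact hm0 (heq2 ▸ h6)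
        rw [dmat_eq v lam hlam σ0 σ hσ hσ0 jj.succ hrow] at hd
        have hττ : (fun a => σ (jj.succ.succAbove a)) = (fun b => σ0 b.succ) := by
          by_contra hc
          rw [if_neg hc] at hd
          exact hd rfl
        have h3 := congrFun hττ a0
        have h4 : jj.succ.succAbove a0 = 0 := by
          have hlt4 : a0.castSucc < jj.succ := by
            rw [Fin.lt_def]
            simp [ha0]
          rw [Fin.succAbove_of_castSucc_lt jj.succ a0 hlt4]
          ext
          simp [ha0]
        rw [h4] at h3
        -- h3 : σ 0 = σ0 a0.succ, but σ 0 = m = σ0 0 < σ0 a0.succ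
        have h5 : σ0 0 < σ0 a0.succ := hσ0 (Fin.succ_pos _)
        rw [← h3, heq2, hm] at h5
        exact lt_irrefl _ h5

lemma indep (hn : 1 ≤ n) (hr : 1 ≤ r)
    (v : Fin (n + 1) → (Fin n → ℝ))
    (lam : Fin (n + 1) → ((Fin n → ℝ) →ᵃ[ℝ] ℝ))
    (hlam : ∀ i j, lam i (v j) = if i = j then 1 else 0) :
    LinearIndependent ℝ (fun q : MinIdx n k r => scaledWhitney lam q.val.2 q.val.1) := by
  classical
  rw [linearIndependent_iff']
  intro s g hsum q00 hq00
  suffices H : ∀ N, ∀ q0 ∈ s, ((q0.val.1 0 : ℕ) * r + (r - 1 - q0.val.2 0)) < N → g q0 = 0 by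
    exact H _ q00 hq00 (Nat.lt_succ_self _)
  intro N
  induction N with
  | zero => intro q hq hlt; omega
  | succ N ih =>
    intro q0 hq0 hlt
    -- notation
    have hσ0 : StrictMono q0.val.1 := q0.prop.1
    have hα0 : ∑ i, q0.val.2 i = r - 1 := q0.prop.2.1
    have hgood0 : ∀ i, i < q0.val.1 0 → q0.val.2 i = 0 := q0.prop.2.2
    -- Step A : scalar relation at the test vectors u0
    have stepA : ∀ x : Fin n → ℝ,
        ∑ q ∈ s, g q * ((∏ j, lam j x ^ q.val.2 j) *
          ∑ i : Fin (k+1), (-1:ℝ)^(i:ℕ) * lam (q.val.1 i) x *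
            dmat lam (fun b => v (q0.val.1 b.succ) - v 0) q.val.1 i) = 0 := by
      intro x
      have h1 := congrFun (congrFun hsum x) (fun b => v (q0.val.1 b.succ) - v 0)
      rw [Finset.sum_apply, Finset.sum_apply] at h1
      simp only [Pi.smul_apply, smul_eq_mul, Pi.zero_apply] at h1
      exact h1
    -- Step B : the polynomial Q
    set Q : MvPolynomial (Fin (n+1)) ℝ :=
      ∑ q ∈ s, ∑ i : Fin (k+1),
        MvPolynomial.monomial (Finsupp.equivFunOnFinite.symm (bmf q.val.2 (q.val.1 i)))
          (g q * ((-1:ℝ)^(i:ℕ) * dmat lam (fun b => v (q0.val.1 b.succ) - v 0) q.val.1 i)) with hQ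
    have hQeval : ∀ y : Fin (n+1) → ℝ,
        MvPolynomial.eval y Q = ∑ q ∈ s, ∑ i : Fin (k+1),
          g q * ((-1:ℝ)^(i:ℕ) * dmat lam (fun b => v (q0.val.1 b.succ) - v 0) q.val.1 i) *
            ∏ j, y j ^ bmf q.val.2 (q.val.1 i) j := by
      intro y
      rw [hQ, map_sum]
      apply Finset.sum_congr rfl; intro q _
      rw [map_sum]
      apply Finset.sum_congr rfl; intro i _
      rw [MvPolynomial.eval_monomial, Finsupp.prod_pow]
      simp only [Finsupp.coe_equivFunOnFinite_symm]
    have hQ1 : ∀ y : Fin (n+1) → ℝ, (∑ j, y j) = 1 → MvPolynomial.eval y Q = 0 := by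
      intro y hy
      obtain ⟨x, hx⟩ := lam_surj v lam hlam y hy
      rw [hQeval]
      have hterm : ∀ q ∈ s, (∑ i : Fin (k+1),
          g q * ((-1:ℝ)^(i:ℕ) * dmat lam (fun b => v (q0.val.1 b.succ) - v 0) q.val.1 i) *
            ∏ j, y j ^ bmf q.val.2 (q.val.1 i) j)
          = g q * ((∏ j, lam j x ^ q.val.2 j) *
            ∑ i : Fin (k+1), (-1:ℝ)^(i:ℕ) * lam (q.val.1 i) x *
              dmat lam (fun b => v (q0.val.1 b.succ) - v 0) q.val.1 i) := by
        intro q hq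
        have hstep : ∀ i : Fin (k+1),
            g q * ((-1:ℝ)^(i:ℕ) * dmat lam (fun b => v (q0.val.1 b.succ) - v 0) q.val.1 i) *
              ∏ j, y j ^ bmf q.val.2 (q.val.1 i) j
            = g q * ((∏ j, lam j x ^ q.val.2 j) * ((-1:ℝ)^(i:ℕ) * lam (q.val.1 i) x *
              dmat lam (fun b => v (q0.val.1 b.succ) - v 0) q.val.1 i)) := by
          intro i
          have h10 : ∀ j, y j ^ bmf q.val.2 (q.val.1 i) j = lam j x ^ bmf q.val.2 (q.val.1 i) j :=
            fun j => by rw [hx j]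
          have hprod : ∏ j, y j ^ bmf q.val.2 (q.val.1 i) j
              = (∏ j, lam j x ^ q.val.2 j) * lam (q.val.1 i) x := by
            rw [Finset.prod_congr rfl (fun j _ => h10 j)]
            exact (bary_mul lam x q.val.2 (q.val.1 i)).symm
          rw [hprod]
          ring
        rw [Finset.sum_congr rfl (fun i _ => hstep i), ← Finset.mul_sum, ← Finset.mul_sum]
      rw [Finset.sum_congr rfl hterm]
      exact stepA x
    have hQhom : ∀ (t : ℝ) (y : Fin (n+1) → ℝ),
        MvPolynomial.eval (fun j => t * y j) Q = t^r * MvPolynomial.eval y Q := by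
      intro t y
      rw [hQeval, hQeval, Finset.mul_sum]
      apply Finset.sum_congr rfl; intro q hq
      rw [Finset.mul_sum]
      apply Finset.sum_congr rfl; intro i _
      have hdeg : ∑ j, bmf q.val.2 (q.val.1 i) j = r := by
        show (∑ j, (q.val.2 j + if j = q.val.1 i then 1 else 0)) = r
        rw [Finset.sum_add_distrib, q.prop.2.1,
          Finset.sum_ite_eq' Finset.univ (q.val.1 i) (fun _ => 1)]
        simp [Nat.sub_add_cancel hr]
      have hpr : ∏ j, (t * y j) ^ bmf q.val.2 (q.val.1 i) j
          = t^r * ∏ j, y j ^ bmf q.val.2 (q.val.1 i) j := by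
        calc ∏ j, (t * y j) ^ bmf q.val.2 (q.val.1 i) j
            = ∏ j, (t ^ bmf q.val.2 (q.val.1 i) j * y j ^ bmf q.val.2 (q.val.1 i) j) :=
              Finset.prod_congr rfl (fun j _ => mul_pow _ _ _)
          _ = (∏ j, t ^ bmf q.val.2 (q.val.1 i) j) * ∏ j, y j ^ bmf q.val.2 (q.val.1 i) j :=
              Finset.prod_mul_distrib
          _ = t^r * ∏ j, y j ^ bmf q.val.2 (q.val.1 i) j := by
              rw [Finset.prod_pow_eq_pow_sum, hdeg]
      rw [hpr]
      ring
    have hQ0 : Q = 0 := by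
      have hL : (∑ j : Fin (n+1), (MvPolynomial.X j : MvPolynomial (Fin (n+1)) ℝ)) ≠ 0 := by
        intro hc
        have hev := congrArg (MvPolynomial.eval (fun _ : Fin (n+1) => (1:ℝ))) hc
        simp only [map_sum, MvPolynomial.eval_X, map_zero] at hev
        rw [Finset.sum_const, Finset.card_univ, Fintype.card_fin] at hev
        have h2 : ((n:ℝ)+1) = 0 := by push_cast at hev ⊢; simpa using hev
        have h3 : (0:ℝ) < (n:ℝ)+1 := by positivity
        linarith
      have hQL : Q * (∑ j : Fin (n+1), MvPolynomial.X j) = 0 := by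
        apply MvPolynomial.funext
        intro z
        rw [_root_.map_mul, map_zero]
        have hXs : MvPolynomial.eval z (∑ j : Fin (n+1), MvPolynomial.X j) = ∑ j, z j := by
          rw [map_sum]
          simp [MvPolynomial.eval_X]
        rw [hXs]
        by_cases ht : (∑ j, z j) = 0
        · rw [ht, mul_zero]
        · have hz : MvPolynomial.eval z Q = 0 := by
            have h7 : z = fun j => (∑ j', z j') * ((∑ j', z j')⁻¹ * z j) := by
              funext j
              rw [← mul_assoc, mul_inv_cancel₀ ht, one_mul]
            rw [show MvPolynomial.eval z Q = MvPolynomial.eval (fun j => (∑ j', z j') * ((∑ j', z j')⁻¹ * z j)) Q by rw [← h7]]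
            rw [hQhom]
            rw [hQ1 _ (by rw [← Finset.mul_sum, inv_mul_eq_div, div_eq_iff ht, one_mul])]
            rw [mul_zero]
          rw [hz, zero_mul]
      rcases mul_eq_zero.mp hQL with h | h
      · exact h
      · exact absurd h hL
    -- Step C : extract the coefficient at β0
    have hcoeff := congrArg
      (MvPolynomial.coeff (Finsupp.equivFunOnFinite.symm (bmf q0.val.2 (q0.val.1 0)))) hQ0
    rw [hQ, MvPolynomial.coeff_sum] at hcoeff
    simp only [MvPolynomial.coeff_zero] at hcoeff
    have hcoeff2 : ∑ q ∈ s, g q * ∑ i : Fin (k+1),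
        (if bmf q.val.2 (q.val.1 i) = bmf q0.val.2 (q0.val.1 0) then
          (-1:ℝ)^(i:ℕ) * dmat lam (fun b => v (q0.val.1 b.succ) - v 0) q.val.1 i else 0) = 0 := by
      have h9 : ∀ q ∈ s, MvPolynomial.coeff (Finsupp.equivFunOnFinite.symm (bmf q0.val.2 (q0.val.1 0)))
          (∑ i : Fin (k+1), MvPolynomial.monomial (Finsupp.equivFunOnFinite.symm (bmf q.val.2 (q.val.1 i)))
            (g q * ((-1:ℝ)^(i:ℕ) * dmat lam (fun b => v (q0.val.1 b.succ) - v 0) q.val.1 i)))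
          = g q * ∑ i : Fin (k+1),
            (if bmf q.val.2 (q.val.1 i) = bmf q0.val.2 (q0.val.1 0) then
              (-1:ℝ)^(i:ℕ) * dmat lam (fun b => v (q0.val.1 b.succ) - v 0) q.val.1 i else 0) := by
        intro q _
        rw [MvPolynomial.coeff_sum, Finset.mul_sum]
        apply Finset.sum_congr rfl; intro i _
        rw [MvPolynomial.coeff_monomial]
        by_cases h : bmf q.val.2 (q.val.1 i) = bmf q0.val.2 (q0.val.1 0)
        · rw [if_pos (by rw [h]), if_pos h]
        · rw [if_neg (fun hc => h (Finsupp.equivFunOnFinite.symm.injective hc)), if_neg h, mul_zero]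
      calc ∑ q ∈ s, g q * ∑ i : Fin (k+1),
            (if bmf q.val.2 (q.val.1 i) = bmf q0.val.2 (q0.val.1 0) then
              (-1:ℝ)^(i:ℕ) * dmat lam (fun b => v (q0.val.1 b.succ) - v 0) q.val.1 i else 0)
          = ∑ q ∈ s, MvPolynomial.coeff (Finsupp.equivFunOnFinite.symm (bmf q0.val.2 (q0.val.1 0)))
            (∑ i : Fin (k+1), MvPolynomial.monomial (Finsupp.equivFunOnFinite.symm (bmf q.val.2 (q.val.1 i)))
              (g q * ((-1:ℝ)^(i:ℕ) * dmat lam (fun b => v (q0.val.1 b.succ) - v 0) q.val.1 i))) :=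
            (Finset.sum_congr rfl h9).symm
        _ = 0 := hcoeff
    -- Step D : the diagonal weight is 1
    have stepD : (∑ i : Fin (k+1),
        (if bmf q0.val.2 (q0.val.1 i) = bmf q0.val.2 (q0.val.1 0) then
          (-1:ℝ)^(i:ℕ) * dmat lam (fun b => v (q0.val.1 b.succ) - v 0) q0.val.1 i else 0)) = 1 := by
      rw [Finset.sum_eq_single 0]
      · rw [if_pos rfl]
        have hrow : ∀ a : Fin k, q0.val.1 ((0:Fin (k+1)).succAbove a) ≠ 0 := by
          intro a
          rw [Fin.succAbove_zero]
          have : q0.val.1 0 < q0.val.1 a.succ := hσ0 (Fin.succ_pos a)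
          exact Fin.pos_iff_ne_zero.mp (lt_of_le_of_lt (Fin.zero_le _) this)
        rw [dmat_eq v lam hlam q0.val.1 q0.val.1 hσ0 hσ0 0 hrow]
        rw [if_pos (by funext a; rw [Fin.succAbove_zero])]
        simp
      · intro i _ hi
        rw [if_neg]
        intro hc
        have h8 := congrFun hc (q0.val.1 i)
        have hne2 : q0.val.1 i ≠ q0.val.1 0 := fun hcc => hi (hσ0.injective hcc)
        have h8' : q0.val.2 (q0.val.1 i) + 1
            = q0.val.2 (q0.val.1 i) + if q0.val.1 i = q0.val.1 0 then 1 else 0 := by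
          simpa [bmf] using h8
        rw [if_neg hne2] at h8'
        omega
      · intro h; exact absurd (Finset.mem_univ 0) h
    -- Step F : conclude by the triangular structure
    rw [← Finset.sum_erase_add s _ hq0, stepD, mul_one] at hcoeff2
    have hzero : ∑ q ∈ s.erase q0, g q * ∑ i : Fin (k+1),
        (if bmf q.val.2 (q.val.1 i) = bmf q0.val.2 (q0.val.1 0) then
          (-1:ℝ)^(i:ℕ) * dmat lam (fun b => v (q0.val.1 b.succ) - v 0) q.val.1 i else 0) = 0 := by
      apply Finset.sum_eq_zero
      intro q hq
      have hqs : q ∈ s := Finset.mem_of_mem_erase hq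
      have hqne : q ≠ q0 := Finset.ne_of_mem_erase hq
      by_cases hw : (∑ i : Fin (k+1),
          (if bmf q.val.2 (q.val.1 i) = bmf q0.val.2 (q0.val.1 0) then
            (-1:ℝ)^(i:ℕ) * dmat lam (fun b => v (q0.val.1 b.succ) - v 0) q.val.1 i else 0)) = 0
      · rw [hw, mul_zero]
      · -- nonzero weight : get a nonzero term
        obtain ⟨i, _, hterm⟩ := Finset.exists_ne_zero_of_sum_ne_zero hw
        have hind : bmf q.val.2 (q.val.1 i) = bmf q0.val.2 (q0.val.1 0) := by
          by_contra hc
          rw [if_neg hc] at hterm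
          exact hterm rfl
        rw [if_pos hind] at hterm
        have hdne : dmat lam (fun b => v (q0.val.1 b.succ) - v 0) q.val.1 i ≠ 0 := by
          intro hc
          rw [hc, mul_zero] at hterm
          exact hterm rfl
        have hqq0 : ¬(q.val.1 = q0.val.1 ∧ q.val.2 = q0.val.2) := by
          rintro ⟨h1, h2⟩
          exact hqne (Subtype.ext (Prod.ext h1 h2))
        have hE := stepE hr v lam hlam q.val.1 q0.val.1 q.val.2 q0.val.2
          q.prop.1 hσ0 q.prop.2.1 q.prop.2.2 hgood0 i hind hdne hqq0
        have hgq : g q = 0 := ih q hqs (lt_of_lt_of_le hE (Nat.lt_succ_iff.mp hlt))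
        rw [hgq, zero_mul]
    rw [hzero, zero_add] at hcoeff2
    exact hcoeff2

/-- generic: multiply a monomial by one more factor -/
lemma prod_pow_succ {ι : Type*} [Fintype ι] [DecidableEq ι] (f : ι → ℝ) (β : ι → ℕ) (t : ι) :
    (∏ j, f j ^ (β j + if j = t then 1 else 0)) = (∏ j, f j ^ β j) * f t := by
  have h : ∀ j, f j ^ (β j + if j = t then 1 else 0) = f j ^ β j * (if j = t then f j else 1) := by
    intro j
    rw [pow_add]
    congr 1
    by_cases hj : j = t <;> simp [hj]
  rw [Finset.prod_congr rfl (fun j _ => h j), Finset.prod_mul_distrib,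
    Finset.prod_ite_eq' Finset.univ t f]
  simp

section Span

variable (hn : 1 ≤ n) (v : Fin (n + 1) → (Fin n → ℝ)) (hv : AffineIndependent ℝ v)
  (lam : Fin (n + 1) → ((Fin n → ℝ) →ᵃ[ℝ] ℝ))
  (hlam : ∀ i j, lam i (v j) = if i = j then 1 else 0)

/-- generating monomials of degree exactly `d` in the barycentric coordinates -/
def gens (lam : Fin (n + 1) → ((Fin n → ℝ) →ᵃ[ℝ] ℝ)) (d : ℕ) : Set ((Fin n → ℝ) → ℝ) :=
  {g | ∃ α : Fin (n+1) → ℕ, (∑ i, α i) = d ∧ g = fun x => ∏ i, lam i x ^ α i}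

include hn hv hlam

lemma mul_lam_mem {d : ℕ} {f : (Fin n → ℝ) → ℝ} (hf : f ∈ Submodule.span ℝ (gens lam d))
    (t : Fin (n+1)) :
    (fun x => f x * lam t x) ∈ Submodule.span ℝ (gens lam (d+1)) := by
  classical
  induction hf using Submodule.span_induction with
  | mem g hg =>
    obtain ⟨α, hα, rfl⟩ := hg
    apply Submodule.subset_span
    refine ⟨fun j => α j + if j = t then 1 else 0, ?_, ?_⟩
    · rw [Finset.sum_add_distrib, hα, Finset.sum_ite_eq' Finset.univ t (fun _ => 1)]
      simp
    · funext x
      rw [prod_pow_succ]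
  | zero =>
    have : (fun x => (0 : ℝ) * lam t x) = 0 := by funext x; simp
    rw [show (fun x => (0:(Fin n → ℝ) → ℝ) x * lam t x) = 0 from by funext x; simp]
    exact Submodule.zero_mem _
  | add g h _ _ hg hh =>
    rw [show (fun x => (g + h) x * lam t x)
        = (fun x => g x * lam t x) + (fun x => h x * lam t x) from by funext x; simp [add_mul]]
    exact Submodule.add_mem _ hg hh
  | smul c g _ hg =>
    rw [show (fun x => (c • g) x * lam t x) = c • (fun x => g x * lam t x) from by
      funext x; simp [mul_assoc]]
    exact Submodule.smul_mem _ _ hg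

lemma span_gens_mono {d : ℕ} {f : (Fin n → ℝ) → ℝ} (hf : f ∈ Submodule.span ℝ (gens lam d)) :
    f ∈ Submodule.span ℝ (gens lam (d+1)) := by
  classical
  induction hf using Submodule.span_induction with
  | mem g hg =>
    obtain ⟨α, hα, rfl⟩ := hg
    have hsplit : (fun x => ∏ i, lam i x ^ α i)
        = ∑ t : Fin (n+1), (fun x => (∏ i, lam i x ^ α i) * lam t x) := by
      funext x
      rw [Finset.sum_apply]
      rw [show ∑ t : Fin (n+1), (∏ i, lam i x ^ α i) * lam t x
          = (∏ i, lam i x ^ α i) * ∑ t, lam t x from by rw [Finset.mul_sum]]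
      rw [lam_sum hn v hv lam hlam x, mul_one]
    rw [hsplit]
    apply Submodule.sum_mem
    intro t _
    apply mul_lam_mem hn v hv lam hlam (Submodule.subset_span ⟨α, hα, rfl⟩) t
  | zero => exact Submodule.zero_mem _
  | add g h _ _ hg hh => exact Submodule.add_mem _ hg hh
  | smul c g _ hg => exact Submodule.smul_mem _ _ hg

lemma coordmul_mem {d : ℕ} {f : (Fin n → ℝ) → ℝ} (hf : f ∈ Submodule.span ℝ (gens lam d))
    (m : Fin n) :
    (fun x => f x * x m) ∈ Submodule.span ℝ (gens lam (d+1)) := by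
  classical
  have hsplit : (fun x => f x * x m)
      = ∑ t : Fin (n+1), v t m • (fun x => f x * lam t x) := by
    funext x
    rw [Finset.sum_apply]
    rw [show ∑ t : Fin (n+1), (v t m • fun x => f x * lam t x) x
        = f x * ∑ t, lam t x * v t m from by
      rw [Finset.mul_sum]; apply Finset.sum_congr rfl; intro t _; simp; ring]
    rw [← lam_coord hn v hv lam hlam x m]
  rw [hsplit]
  apply Submodule.sum_mem
  intro t _
  exact Submodule.smul_mem _ _ (mul_lam_mem hn v hv lam hlam hf t)

lemma monomial_mem : ∀ (d : ℕ) (γ : Fin n → ℕ), (∑ m, γ m) ≤ d →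
    (fun x : Fin n → ℝ => ∏ m, x m ^ γ m) ∈ Submodule.span ℝ (gens lam d) := by
  intro d
  induction d with
  | zero =>
    intro γ hγ
    have hγ0 : ∀ m, γ m = 0 := by
      intro m
      have := Finset.single_le_sum (f := γ) (fun j _ => Nat.zero_le _) (Finset.mem_univ m)
      omega
    rw [show (fun x : Fin n → ℝ => ∏ m, x m ^ γ m) = fun x => ∏ i : Fin (n+1), lam i x ^ (0:ℕ) from by
      funext x; simp [hγ0]]
    exact Submodule.subset_span ⟨fun _ => 0, by simp, rfl⟩
  | succ d ihd =>
    intro γ hγ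
    by_cases hle : (∑ m, γ m) ≤ d
    · exact span_gens_mono hn v hv lam hlam (ihd γ hle)
    · have hsum : (∑ m, γ m) = d + 1 := by omega
      have hex : ∃ m, γ m ≠ 0 := by
        by_contra hc
        push_neg at hc
        simp [hc] at hsum
      obtain ⟨m, hm⟩ := hex
      set γ' : Fin n → ℕ := fun j => γ j - if j = m then 1 else 0 with hγ'
      have hg : ∀ j, γ' j + (if j = m then 1 else 0) = γ j := by
        intro j
        by_cases hj : j = m
        · subst hj; simp [hγ']; omega
        · simp [hγ', hj]
      have hγ's : (∑ j, γ' j) ≤ d := by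
        have h1 : (∑ j, γ' j) + (∑ j, if j = m then 1 else 0) = ∑ j, γ j := by
          rw [← Finset.sum_add_distrib]
          exact Finset.sum_congr rfl (fun j _ => hg j)
        rw [Finset.sum_ite_eq' Finset.univ m (fun _ => 1)] at h1
        simp at h1
        omega
      have hmono : (fun x : Fin n → ℝ => ∏ j, x j ^ γ j)
          = fun x => (∏ j, x j ^ γ' j) * x m := by
        funext x
        rw [← prod_pow_succ (fun j => x j) γ' m]
        exact Finset.prod_congr rfl (fun j _ => by rw [hg j])
      rw [hmono]
      exact coordmul_mem hn v hv lam hlam (ihd γ' hγ's) m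

lemma polyfun_mem (d : ℕ) (p : MvPolynomial (Fin n) ℝ) (hp : p.totalDegree ≤ d) :
    (fun x => MvPolynomial.eval x p) ∈ Submodule.span ℝ (gens lam d) := by
  classical
  have heval : (fun x => MvPolynomial.eval x p)
      = ∑ γ ∈ p.support, MvPolynomial.coeff γ p • (fun x : Fin n → ℝ => ∏ m, x m ^ γ m) := by
    funext x
    rw [Finset.sum_apply, MvPolynomial.eval_eq']
    apply Finset.sum_congr rfl
    intro γ _
    simp [smul_eq_mul]
  rw [heval]
  apply Submodule.sum_mem
  intro γ hγ
  apply Submodule.smul_mem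
  apply monomial_mem hn v hv lam hlam
  have h1 := MvPolynomial.le_totalDegree hγ
  have h2 : (γ.sum fun _ e => e) = ∑ m, γ m := by
    rw [Finsupp.sum_fintype]
    intro a; rfl
  omega

end Span

def mulWhitney (lam : Fin (n + 1) → ((Fin n → ℝ) →ᵃ[ℝ] ℝ)) (σ : Fin (k+1) → Fin (n+1)) :
    ((Fin n → ℝ) → ℝ) →ₗ[ℝ] Form n k :=
  { toFun := fun f => fun x u => f x * whitney lam σ x u
    map_add' := by intro f g; funext x u; simp [add_mul]
    map_smul' := by intro c f; funext x u; simp [mul_assoc] }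

lemma goodify (lam : Fin (n + 1) → ((Fin n → ℝ) →ᵃ[ℝ] ℝ))
    (σ : Fin (k+1) → Fin (n+1)) (hσ : StrictMono σ)
    (α : Fin (n+1) → ℕ) (hα : ∑ i, α i = r - 1) :
    scaledWhitney lam α σ ∈ Submodule.span ℝ
      (Set.range (fun q : MinIdx n k r => scaledWhitney lam q.val.2 q.val.1)) := by
  classical
  by_cases hgood : ∀ i, i < σ 0 → α i = 0
  · exact Submodule.subset_span ⟨⟨(σ, α), hσ, hα, hgood⟩, rfl⟩
  · push_neg at hgood
    obtain ⟨i', hi', hαi'⟩ := hgood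
    set T : Finset (Fin (n+1)) := Finset.univ.filter (fun i => α i ≠ 0) with hT
    have hTne : T.Nonempty := ⟨i', by simp [hT, hαi']⟩
    set i0 := T.min' hTne with hi0
    have hαi0 : α i0 ≠ 0 := by
      have := T.min'_mem hTne
      simp only [hT, Finset.mem_filter] at this
      exact this.2
    have hmin : ∀ m, m < i0 → α m = 0 := by
      intro m hm
      by_contra hc
      have h2 : i0 ≤ m := T.min'_le m (by simp [hT, hc])
      exact absurd (lt_of_lt_of_le hm h2) (lt_irrefl m)
    have hi0lt : i0 < σ 0 := by
      have h1 : i0 ≤ i' := T.min'_le i' (by simp [hT, hαi'])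
      exact lt_of_le_of_lt h1 hi'
    rw [scaledWhitney_reduce lam σ α i0 (Nat.one_le_iff_ne_zero.mpr hαi0)]
    apply Submodule.sum_mem
    intro j _
    apply Submodule.smul_mem
    have hτmono : StrictMono (Fin.cases i0 σ : Fin (k+2) → Fin (n+1)) := by
      rw [Fin.strictMono_iff_lt_succ]
      intro i
      induction i using Fin.cases with
      | zero =>
        exact hi0lt
      | succ a =>
        show (Fin.cases i0 σ (a.castSucc.succ) : Fin (n+1)) < Fin.cases i0 σ (a.succ.succ)
        rw [Fin.cases_succ, Fin.cases_succ]
        exact hσ (Fin.castSucc_lt_succ (i := a))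
    have hσ'mono : StrictMono (fun a : Fin (k+1) =>
        (Fin.cases i0 σ : Fin (k+2) → Fin (n+1)) ((j.succ).succAbove a)) :=
      hτmono.comp (Fin.strictMono_succAbove j.succ)
    have hσ'0 : (Fin.cases i0 σ : Fin (k+2) → Fin (n+1)) ((j.succ).succAbove 0) = i0 := by
      have h4 : (j.succ).succAbove (0 : Fin (k+1)) = 0 := by
        have hlt4 : (0 : Fin (k+1)).castSucc < j.succ := by
          rw [Fin.castSucc_zero]
          exact Fin.succ_pos j
        rw [Fin.succAbove_of_castSucc_lt j.succ 0 hlt4, Fin.castSucc_zero]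
      rw [h4]
      simp
    have hsum' : ∑ m, ((α m - if m = i0 then 1 else 0) + if m = σ j then 1 else 0) = r - 1 := by
      rw [Finset.sum_add_distrib, Finset.sum_ite_eq' Finset.univ (σ j) (fun _ => 1),
        if_pos (Finset.mem_univ (σ j))]
      have e2 : (∑ m, (α m - if m = i0 then 1 else 0)) + (∑ m, if m = i0 then (1:ℕ) else 0)
          = ∑ m, α m := by
        rw [← Finset.sum_add_distrib]
        apply Finset.sum_congr rfl
        intro m _
        by_cases hm : m = i0
        · subst hm
          rw [if_pos rfl]
          omega
        · simp [hm]
      have e3 : (∑ m, if m = i0 then (1:ℕ) else 0) = 1 := by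
        rw [Finset.sum_ite_eq' Finset.univ i0 (fun _ => 1)]
        simp
      omega
    have hgood' : ∀ m, m < (Fin.cases i0 σ : Fin (k+2) → Fin (n+1)) ((j.succ).succAbove 0) →
        ((α m - if m = i0 then 1 else 0) + if m = σ j then 1 else 0) = 0 := by
      intro m hm
      rw [hσ'0] at hm
      have h5 : α m = 0 := hmin m hm
      have h6 : m ≠ i0 := Fin.ne_of_lt hm
      have h7 : m ≠ σ j := by
        have : i0 < σ j := lt_of_lt_of_le hi0lt (hσ.monotone (Fin.zero_le j))
        exact Fin.ne_of_lt (lt_trans hm this)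
      simp [h5, h6, h7]
    exact Submodule.subset_span
      ⟨⟨(fun a => (Fin.cases i0 σ : Fin (k+2) → Fin (n+1)) ((j.succ).succAbove a),
         fun m => (α m - if m = i0 then 1 else 0) + if m = σ j then 1 else 0),
        hσ'mono, hsum', hgood'⟩, rfl⟩


lemma span_eq (hn : 1 ≤ n) (hr : 1 ≤ r)
    (v : Fin (n + 1) → (Fin n → ℝ)) (hv : AffineIndependent ℝ v)
    (lam : Fin (n + 1) → ((Fin n → ℝ) →ᵃ[ℝ] ℝ))
    (hlam : ∀ i j, lam i (v j) = if i = j then 1 else 0) :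
    Submodule.span ℝ (Set.range (fun q : MinIdx n k r => scaledWhitney lam q.val.2 q.val.1))
      = PrMinus n k r lam := by
  apply le_antisymm
  · rw [Submodule.span_le]
    rintro _ ⟨q, rfl⟩
    apply Submodule.subset_span
    refine ⟨∏ i, (lamPoly lam i) ^ q.val.2 i, q.val.1, q.prop.1, ?_, ?_⟩
    · apply le_trans (MvPolynomial.totalDegree_finset_prod _ _)
      calc ∑ i, ((lamPoly lam i) ^ q.val.2 i).totalDegree
          ≤ ∑ i, q.val.2 i * (lamPoly lam i).totalDegree :=
            Finset.sum_le_sum (fun i _ => MvPolynomial.totalDegree_pow _ _)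
        _ ≤ ∑ i, q.val.2 i * 1 :=
            Finset.sum_le_sum (fun i _ => Nat.mul_le_mul_left _ (totalDegree_lamPoly lam i))
        _ = r - 1 := by simpa using q.prop.2.1
    · funext x u
      have he : MvPolynomial.eval x (∏ i, (lamPoly lam i) ^ q.val.2 i)
          = ∏ i, lam i x ^ q.val.2 i := by
        rw [map_prod]
        apply Finset.prod_congr rfl
        intro i _
        rw [map_pow, eval_lamPoly]
      show (∏ i, lam i x ^ q.val.2 i) * whitney lam q.val.1 x u
        = MvPolynomial.eval x (∏ i, (lamPoly lam i) ^ q.val.2 i) * whitney lam q.val.1 x u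
      rw [he]
  · unfold PrMinus
    rw [Submodule.span_le]
    rintro _ ⟨p, σ, hσ, hdeg, rfl⟩
    have h1 := polyfun_mem hn v hv lam hlam (r-1) p hdeg
    have h3 : mulWhitney lam σ (fun x => MvPolynomial.eval x p)
        ∈ Submodule.map (mulWhitney lam σ) (Submodule.span ℝ (gens lam (r-1))) :=
      Submodule.mem_map_of_mem h1
    rw [Submodule.map_span] at h3
    have h4 : (mulWhitney lam σ) '' (gens lam (r-1)) ⊆
        (Submodule.span ℝ (Set.range (fun q : MinIdx n k r =>
          scaledWhitney lam q.val.2 q.val.1)) : Set (Form n k)) := by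
      rintro _ ⟨g, ⟨α, hα, rfl⟩, rfl⟩
      exact goodify lam σ hσ α hα
    exact Submodule.span_le.mpr h4 h3

end SWB

/-- (Basis theorem for high-order Whitney forms.) The forms `λ^α ω_σ`, for
`σ ∈ S_k^n` and `α ∈ I_σ`, are linearly independent and span `P_r^- Λ^k(T)`. -/
theorem scaledWhitney_basis {n k r : ℕ} (hn : 1 ≤ n) (hk : k ≤ n) (hr : 1 ≤ r)
    (v : Fin (n + 1) → (Fin n → ℝ)) (hv : AffineIndependent ℝ v)
    (lam : Fin (n + 1) → ((Fin n → ℝ) →ᵃ[ℝ] ℝ))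
    (hlam : ∀ i j, lam i (v j) = if i = j then 1 else 0) :
    LinearIndependent ℝ
      (fun q : MinIdx n k r => scaledWhitney lam q.val.2 q.val.1) ∧
    Submodule.span ℝ
      (Set.range (fun q : MinIdx n k r => scaledWhitney lam q.val.2 q.val.1)) =
      PrMinus n k r lam := by
  constructor
  · exact SWB.indep hn hr v lam hlam
  · exact SWB.span_eq hn hr v hv lam hlam
end
end

section
/- Let n ≥ 1, 0 ≤ k ≤ n and r ≥ 1. The number of pairs (σ, α) with σ ∈ S_k^n a strictly increasing map {0,…,k} → {0,…,n} and α ∈ ℕ^{n+1} a multi-index with |α| = r−1 and α_i = 0 for all i < σ(0), equals binom(r+k−1, k) · binom(n+r, n−k). -/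
open MeasureTheory Matrix

noncomputable section

section AuxCombinatorics

open Finset

private theorem finmk_val {N a : ℕ} (h : a < N) : (Fin.mk a h).val = a := rfl

/-- Sum over a shifted window equals the full sum when low entries vanish. -/
private theorem sum_shift (N m : ℕ) (hm : m ≤ N) (f : Fin (N + 1) → ℕ)
    (hz : ∀ i : Fin (N + 1), i.1 < m → f i = 0) :
    ∑ i : Fin (N + 1 - m), f ⟨m + i.1, by have := i.isLt; omega⟩ = ∑ i, f i := by
  classical
  set g : ℕ → ℕ := fun j => if h : j < N + 1 then f ⟨j, h⟩ else 0 with hg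
  have h1 : ∑ i, f i = ∑ j ∈ range (N + 1), g j := by
    rw [← Fin.sum_univ_eq_sum_range]
    refine Finset.sum_congr rfl fun i _ => ?_
    simp only [hg]
    rw [dif_pos i.isLt]
  have h2 : ∑ i : Fin (N + 1 - m), f ⟨m + i.1, by have := i.isLt; omega⟩
      = ∑ j ∈ range (N + 1 - m), g (m + j) := by
    rw [← Fin.sum_univ_eq_sum_range (fun j => g (m + j))]
    refine Finset.sum_congr rfl fun i _ => ?_
    have hi := i.isLt
    simp only [hg]
    rw [dif_pos (by omega)]
  have h3 : ∑ j ∈ range m, g j = 0 := by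
    refine Finset.sum_eq_zero fun j hj => ?_
    have hj' := mem_range.mp hj
    simp only [hg]
    rw [dif_pos (by omega)]
    exact hz _ (by simpa using hj')
  rw [h1, h2, ← Finset.sum_range_add_sum_Ico g (show m ≤ N + 1 by omega), h3, zero_add,
    Finset.sum_Ico_eq_sum_range]

/-- Stars and bars, as an equivalence. -/
private noncomputable def sbEquiv (s t : ℕ) :
    {f : Fin s → ℕ // ∑ i, f i = t} ≃ Sym (Fin s) t :=
  (Sym.equivNatSumOfFintype (Fin s) t).symm

private theorem natCard_sym (s t : ℕ) :
    Nat.card (Sym (Fin s) t) = (s + t - 1).choose t := by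
  rw [Nat.card_eq_fintype_card, Sym.card_sym_eq_choose, Fintype.card_fin]

/-- The number of strictly monotone maps `Fin k → Fin b` is `b.choose k`. -/
private theorem card_strictMonoMaps (k b : ℕ) :
    Nat.card {f : Fin k → Fin b // StrictMono f} = b.choose k := by
  classical
  have e : {f : Fin k → Fin b // StrictMono f} ≃ {s : Finset (Fin b) // s.card = k} :=
    { toFun := fun f => ⟨Finset.univ.image f.1, by
        rw [Finset.card_image_of_injective _ f.2.injective, Finset.card_univ, Fintype.card_fin]⟩
      invFun := fun s => ⟨(s.1.orderEmbOfFin s.2 : Fin k → Fin b),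
        (s.1.orderEmbOfFin s.2).strictMono⟩
      left_inv := fun f => Subtype.ext
        (Finset.orderEmbOfFin_unique _
          (fun x => Finset.mem_image_of_mem _ (Finset.mem_univ x)) f.2).symm
      right_inv := fun s => Subtype.ext (by
        rw [← Finset.coe_inj, Finset.coe_image, Finset.coe_univ, Set.image_univ,
          Finset.range_orderEmbOfFin]) }
  rw [Nat.card_congr e, Nat.card_eq_fintype_card, Fintype.card_finset_len, Fintype.card_fin]

private theorem natCard_sigma {N : ℕ} (G : Fin N → Type*) [∀ m, Finite (G m)] :
    Nat.card (Σ m, G m) = ∑ m, Nat.card (G m) := by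
  letI : ∀ m, Fintype (G m) := fun m => Fintype.ofFinite _
  rw [Nat.card_eq_fintype_card, Fintype.card_sigma]
  exact Finset.sum_congr rfl fun m _ => (Nat.card_eq_fintype_card).symm

set_option maxHeartbeats 1000000

/-- Strictly monotone maps with fixed first value `m` correspond to strictly
monotone maps into the values above `m`. -/
private def sigEquiv (n k : ℕ) (m : Fin (n + 1)) :
    {σ : Fin (k + 1) → Fin (n + 1) // StrictMono σ ∧ σ 0 = m} ≃
      {τ : Fin k → Fin (n - m.1) // StrictMono τ} where
  toFun σ := ⟨fun j => ⟨(σ.1 j.succ).1 - (m.1 + 1), by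
      have h1 := (σ.1 j.succ).isLt
      have h2 : σ.1 0 < σ.1 j.succ := σ.2.1 (Fin.succ_pos j)
      have h3 : (σ.1 0).1 = m.1 := congrArg Fin.val σ.2.2
      rw [Fin.lt_def] at h2
      omega⟩, by
    intro a b hab
    have h1 : σ.1 a.succ < σ.1 b.succ := σ.2.1 (Fin.succ_lt_succ_iff.mpr hab)
    have h2 : σ.1 0 < σ.1 a.succ := σ.2.1 (Fin.succ_pos a)
    have h3 : (σ.1 0).1 = m.1 := congrArg Fin.val σ.2.2
    rw [Fin.lt_def] at h1 h2
    rw [Fin.mk_lt_mk]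
    omega⟩
  invFun τ := ⟨Fin.cons m (fun j =>
      ⟨m.1 + 1 + (τ.1 j).1, by have := (τ.1 j).isLt; have := m.isLt; omega⟩),
    ⟨by
      intro a b hab
      rcases Fin.eq_zero_or_eq_succ b with rfl | ⟨b', rfl⟩
      · exact absurd hab (Fin.not_lt_zero a)
      rcases Fin.eq_zero_or_eq_succ a with rfl | ⟨a', rfl⟩
      · rw [Fin.cons_zero, Fin.cons_succ, Fin.lt_def]
        show m.1 < m.1 + 1 + (τ.1 b').1
        omega
      · rw [Fin.cons_succ, Fin.cons_succ, Fin.lt_def]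
        show m.1 + 1 + (τ.1 a').1 < m.1 + 1 + (τ.1 b').1
        have h := τ.2 (Fin.succ_lt_succ_iff.mp hab)
        rw [Fin.lt_def] at h
        omega,
    Fin.cons_zero _ _⟩⟩
  left_inv σ := by
    obtain ⟨σ, hσ, h0⟩ := σ
    refine Subtype.ext (funext fun j => ?_)
    rcases Fin.eq_zero_or_eq_succ j with rfl | ⟨j', rfl⟩
    · simp only [Fin.cons_zero]
      exact h0.symm
    · simp only [Fin.cons_succ]
      have h6 : σ 0 < σ j'.succ := hσ (Fin.succ_pos j')
      have h3 : (σ 0).1 = m.1 := congrArg Fin.val h0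
      rw [Fin.lt_def] at h6
      apply Fin.ext
      show m.1 + 1 + ((σ j'.succ).1 - (m.1 + 1)) = (σ j'.succ).1
      omega
  right_inv τ := by
    obtain ⟨τ, hτ⟩ := τ
    refine Subtype.ext (funext fun j => ?_)
    apply Fin.ext
    simp only [Fin.cons_succ]
    show m.1 + 1 + (τ j).1 - (m.1 + 1) = (τ j).1
    omega

/-- Multi-indices vanishing below `m` correspond to multi-indices on the last
`n + 1 - m` coordinates. -/
private def alEquiv (n r : ℕ) (m : Fin (n + 1)) :
    {α : Fin (n + 1) → ℕ // (∑ i, α i) = r - 1 ∧ ∀ i : Fin (n + 1), i.1 < m.1 → α i = 0} ≃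
      {β : Fin (n + 1 - m.1) → ℕ // ∑ i, β i = r - 1} where
  toFun α := ⟨fun i => α.1 ⟨m.1 + i.1, by have := i.isLt; have := m.isLt; omega⟩, by
    have hm : m.1 ≤ n := by have := m.isLt; omega
    rw [sum_shift n m.1 hm α.1 α.2.2]
    exact α.2.1⟩
  invFun β := ⟨fun i => if h : m.1 ≤ i.1 then β.1 ⟨i.1 - m.1, by have := i.isLt; omega⟩ else 0,
    ⟨by
      have hm : m.1 ≤ n := by have := m.isLt; omega
      rw [← sum_shift n m.1 hm _ (fun i hi => dif_neg (by omega))]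
      refine (Finset.sum_congr rfl fun i _ => ?_).trans β.2
      simp only [finmk_val]
      rw [dif_pos (Nat.le_add_right m.1 i.1)]
      have h5 : ∀ (h : m.1 + i.1 - m.1 < n + 1 - m.1),
          (⟨m.1 + i.1 - m.1, h⟩ : Fin (n + 1 - m.1)) = i := fun h =>
        Fin.ext (by rw [finmk_val]; omega)
      rw [h5],
    fun i hi => dif_neg (by omega)⟩⟩
  left_inv α := by
    obtain ⟨α, hs, hz⟩ := α
    refine Subtype.ext (funext fun i => ?_)
    by_cases hi : m.1 ≤ i.1
    · simp only [dif_pos hi]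
      have h5 : ∀ (h : m.1 + (i.1 - m.1) < n + 1),
          (⟨m.1 + (i.1 - m.1), h⟩ : Fin (n + 1)) = i := fun h =>
        Fin.ext (by rw [finmk_val]; omega)
      rw [h5]
    · simp only [dif_neg hi]
      exact (hz i (by omega)).symm
  right_inv β := by
    obtain ⟨β, hβ⟩ := β
    refine Subtype.ext (funext fun i => ?_)
    simp only [finmk_val]
    rw [dif_pos (Nat.le_add_right m.1 i.1)]
    have h5 : ∀ (h : m.1 + i.1 - m.1 < n + 1 - m.1),
        (⟨m.1 + i.1 - m.1, h⟩ : Fin (n + 1 - m.1)) = i := fun h =>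
      Fin.ext (by rw [finmk_val]; omega)
    rw [h5]

/-- Decomposition of the fiber over `m = σ 0`. -/
private noncomputable def fiberEquiv (n k r : ℕ) (m : Fin (n + 1)) :
    {x : MinIdx n k r // x.1.1 0 = m} ≃
      ({τ : Fin k → Fin (n - m.1) // StrictMono τ} × Sym (Fin (n + 1 - m.1)) (r - 1)) :=
  ((Equiv.subtypeSubtypeEquivSubtypeInter
      (fun q : (Fin (k + 1) → Fin (n + 1)) × (Fin (n + 1) → ℕ) =>
        StrictMono q.1 ∧ (∑ i, q.2 i) = r - 1 ∧ ∀ i, i < q.1 0 → q.2 i = 0)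
      (fun q => q.1 0 = m)).trans
    ((Equiv.subtypeEquivRight
      (q := fun q : (Fin (k + 1) → Fin (n + 1)) × (Fin (n + 1) → ℕ) =>
        (StrictMono q.1 ∧ q.1 0 = m) ∧
          ((∑ i, q.2 i) = r - 1 ∧ ∀ i : Fin (n + 1), i.1 < m.1 → q.2 i = 0))
      (fun q => by
        constructor
        · rintro ⟨⟨h1, h2, h3⟩, h4⟩
          refine ⟨⟨h1, h4⟩, h2, fun i hi => h3 i ?_⟩
          rw [h4, Fin.lt_def]
          exact hi
        · rintro ⟨⟨h1, h4⟩, h2, h3⟩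
          refine ⟨⟨h1, h2, fun i hi => h3 i ?_⟩, h4⟩
          rw [h4, Fin.lt_def] at hi
          exact hi)).trans
      (Equiv.subtypeProdEquivProd
        (p := fun σ : Fin (k + 1) → Fin (n + 1) => StrictMono σ ∧ σ 0 = m)
        (q := fun α : Fin (n + 1) → ℕ =>
          (∑ i, α i) = r - 1 ∧ ∀ i : Fin (n + 1), i.1 < m.1 → α i = 0)))).trans
    ((sigEquiv n k m).prodCongr ((alEquiv n r m).trans (sbEquiv _ _)))

private noncomputable def mainEquiv (n k r : ℕ) :
    MinIdx n k r ≃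
      Σ m : Fin (n + 1),
        ({τ : Fin k → Fin (n - m.1) // StrictMono τ} × Sym (Fin (n + 1 - m.1)) (r - 1)) :=
  (Equiv.sigmaFiberEquiv (fun x : MinIdx n k r => x.1.1 0)).symm.trans
    (Equiv.sigmaCongrRight fun m => fiberEquiv n k r m)

private theorem key_sum (n k r : ℕ) (hk : k ≤ n) (hr : 1 ≤ r) :
    ∑ j ∈ Finset.range (n + 1), (n - j).choose k * ((n - j) + (r - 1)).choose (r - 1)
      = (r + k - 1).choose k * (n + r).choose (n - k) := by
  have hrefl : ∑ j ∈ range (n + 1), (n - j).choose k * ((n - j) + (r - 1)).choose (r - 1)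
      = ∑ j ∈ range (n + 1), j.choose k * (j + (r - 1)).choose (r - 1) := by
    rw [← Finset.sum_range_reflect (fun j => j.choose k * (j + (r - 1)).choose (r - 1)) (n + 1)]
    exact Finset.sum_congr rfl fun j hj => by rw [show n + 1 - 1 - j = n - j from by omega]
  rw [hrefl]
  have hterm : ∀ j, j.choose k * (j + (r - 1)).choose (r - 1)
      = (r + k - 1).choose k * (j + (r - 1)).choose ((r - 1) + k) := by
    intro j
    by_cases hj : k ≤ j
    · have h := Nat.choose_mul (n := j + (r - 1)) (k := (r - 1) + k) (s := r - 1)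
        (by omega)
      rw [show j + (r - 1) - (r - 1) = j from by omega,
        show (r - 1) + k - (r - 1) = k from by omega] at h
      have hsym : ((r - 1) + k).choose (r - 1) = (r + k - 1).choose k := by
        rw [show (r - 1) + k = r + k - 1 from by omega,
          ← Nat.choose_symm (show k ≤ r + k - 1 from by omega)]
        congr 1
        omega
      rw [← hsym]
      calc j.choose k * (j + (r - 1)).choose (r - 1)
          = (j + (r - 1)).choose (r - 1) * j.choose k := mul_comm _ _
        _ = (j + (r - 1)).choose ((r - 1) + k) * ((r - 1) + k).choose (r - 1) := h.symm
        _ = ((r - 1) + k).choose (r - 1) * (j + (r - 1)).choose ((r - 1) + k) := mul_comm _ _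
    · push_neg at hj
      rw [Nat.choose_eq_zero_of_lt hj,
        Nat.choose_eq_zero_of_lt (show j + (r - 1) < (r - 1) + k from by omega),
        zero_mul, mul_zero]
  rw [Finset.sum_congr rfl fun j _ => hterm j, ← Finset.mul_sum]
  congr 1
  have h2 : ∑ j ∈ range (n + 1), (j + (r - 1)).choose ((r - 1) + k)
      = ∑ m ∈ Finset.Icc (r - 1) (n + (r - 1)), m.choose ((r - 1) + k) := by
    rw [show Finset.Icc (r - 1) (n + (r - 1)) = Finset.Ico (r - 1) (n + r) from by
      rw [show n + r = (n + (r - 1)) + 1 from by omega, Finset.Ico_add_one_right_eq_Icc]]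
    rw [Finset.sum_Ico_eq_sum_range, show n + r - (r - 1) = n + 1 from by omega]
    exact Finset.sum_congr rfl fun j _ => by rw [Nat.add_comm]
  rw [h2]
  have h3 : ∑ m ∈ Finset.Icc (r - 1) (n + (r - 1)), m.choose ((r - 1) + k)
      = ∑ m ∈ Finset.Icc ((r - 1) + k) (n + (r - 1)), m.choose ((r - 1) + k) := by
    refine (Finset.sum_subset (Finset.Icc_subset_Icc (by omega) le_rfl) fun x hx hnx => ?_).symm
    rw [Finset.mem_Icc] at hx
    rw [Finset.mem_Icc] at hnx
    exact Nat.choose_eq_zero_of_lt (by omega)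
  rw [h3, Nat.sum_Icc_choose,
    show n + (r - 1) + 1 = n + r from by omega,
    show (r - 1) + k + 1 = r + k from by omega,
    ← Nat.choose_symm (show r + k ≤ n + r from by omega)]
  congr 1
  omega

end AuxCombinatorics


/-- The number of pairs `(σ, α)` with `σ ∈ S_k^n` strictly increasing,
`|α| = r − 1` and `αᵢ = 0` for all `i < σ(0)` equals
`binom(r+k−1, k) · binom(n+r, n−k)`. -/
theorem card_minIdx {n k r : ℕ} (hn : 1 ≤ n) (hk : k ≤ n) (hr : 1 ≤ r) :
    Nat.card (MinIdx n k r) = (r + k - 1).choose k * (n + r).choose (n - k) := by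
  rw [Nat.card_congr (mainEquiv n k r), natCard_sigma]
  have step : ∀ m : Fin (n + 1),
      Nat.card ({τ : Fin k → Fin (n - m.1) // StrictMono τ} × Sym (Fin (n + 1 - m.1)) (r - 1))
        = (n - m.1).choose k * ((n - m.1) + (r - 1)).choose (r - 1) := by
    intro m
    rw [Nat.card_prod, card_strictMonoMaps, natCard_sym,
      show (n + 1 - m.1) + (r - 1) - 1 = (n - m.1) + (r - 1) from by have := m.isLt; omega]
  rw [Finset.sum_congr rfl fun m _ => step m,
    Fin.sum_univ_eq_sum_range (fun j => (n - j).choose k * ((n - j) + (r - 1)).choose (r - 1))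
      (n + 1)]
  exact key_sum n k r hk hr
end
end

section
/- Let n ≥ 1, r ≥ 1 and 0 ≤ k ≤ n. Then binom(r+k−1, k) · binom(n+r, n−k) ≤ binom(n+r, n) · binom(n, k), with equality if and only if k = 0. (The left-hand side is the dimension of P_r^− Λ^k and the right-hand side is the dimension of P_r Λ^k; hence the inclusion P_r^− Λ^k ⊆ P_r Λ^k is strict unless k = 0.) -/
open MeasureTheory Matrix

noncomputable section

lemma key_identity (n k r : ℕ) (hk : k ≤ n) (hr : 1 ≤ r) :
    (r + k) * ((r + k - 1).choose k * (n + r).choose (n - k)) =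
      r * ((n + r).choose n * n.choose k) := by
  obtain ⟨r', rfl⟩ := Nat.exists_eq_add_of_le' hr
  have h1 : (r' + 1 + k - 1) = r' + k := by omega
  have h2 : (r' + 1 + k) * (r' + k).choose k = (r' + 1) * (r' + k + 1).choose (r' + 1) := by
    have := Nat.add_one_mul_choose_eq (r' + k) r'
    rw [Nat.choose_symm_add] at this
    rw [show r' + 1 + k = r' + k + 1 by ring, this]; ring
  have h3 : (r' + k + 1).choose (r' + 1) = (r' + 1 + k).choose k := by
    rw [show r' + k + 1 = (r' + 1) + k by ring, Nat.choose_symm_add]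
  have h4 : (n + (r' + 1)).choose n * n.choose k =
      (n + (r' + 1)).choose (n - k) * (r' + 1 + k).choose k := by
    have := Nat.choose_mul (n := n + (r' + 1)) (k := n) (s := n - k)
      (by omega)
    rw [Nat.choose_symm hk] at this
    rw [this]
    congr 2 <;> omega
  rw [h1, ← mul_assoc, h2, h3, h4]; ring

/-- `binom(r+k−1,k)·binom(n+r,n−k) ≤ binom(n+r,n)·binom(n,k)`, with equality
iff `k = 0`: the inclusion `P_r^- Λ^k ⊆ P_r Λ^k` is strict unless `k = 0`. -/
theorem dim_prMinus_le_dim_pr {n k r : ℕ} (hn : 1 ≤ n) (hr : 1 ≤ r) (hk : k ≤ n) :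
    (r + k - 1).choose k * (n + r).choose (n - k) ≤ (n + r).choose n * n.choose k ∧
    ((r + k - 1).choose k * (n + r).choose (n - k) = (n + r).choose n * n.choose k ↔
      k = 0) := by
  have key := key_identity n k r hk hr
  have hRpos : 0 < (n + r).choose n * n.choose k :=
    Nat.mul_pos (Nat.choose_pos (by omega)) (Nat.choose_pos hk)
  constructor
  · by_contra h
    push_neg at h
    have h1 : r * ((n + r).choose n * n.choose k) <
        r * ((r + k - 1).choose k * (n + r).choose (n - k)) :=
      mul_lt_mul_of_pos_left h (show 0 < r by omega)
    have h2 : r * ((r + k - 1).choose k * (n + r).choose (n - k)) ≤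
        (r + k) * ((r + k - 1).choose k * (n + r).choose (n - k)) :=
      Nat.mul_le_mul_right _ (by omega)
    linarith
  · constructor
    · intro heq
      rw [heq] at key
      have : (r + k) * ((n + r).choose n * n.choose k) =
          r * ((n + r).choose n * n.choose k) := key
      have := Nat.eq_of_mul_eq_mul_right hRpos this
      omega
    · rintro rfl
      simp
end
end

section
/- Let n ≥ 1, r ≥ 1 and 0 ≤ k ≤ n. Then binom(n+1, k+1) · binom(n+r−1, n) ≥ binom(r+k−1, k) · binom(n+r, n−k), with equality if and only if k = n or r = 1. (The left-hand side is the cardinality of the index set {(σ,α) : σ ∈ S_k^n, α ∈ I(n+1,r−1)} parametrizing the redundant set X_r^k(T) of small simplices, and the right-hand side is dim P_r^− Λ^k(T); hence the redundant set of weights is minimal precisely when k = n or r = 1, in addition to the collapsing case k = 0.) -/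
open MeasureTheory Matrix

noncomputable section

open Nat in
lemma key_id (n k m : ℕ) (hk : k ≤ n) :
    (k + 1) * (n + m + 1) * ((n + 1).choose (k + 1) * (n + m).choose n) =
      (n + 1) * (m + 1 + k) * ((m + k).choose k * (n + m + 1).choose (n - k)) := by
  have f1 : (n + 1).choose (k + 1) * ((k + 1) * k !) * (n - k)! = (n + 1)! := by
    rw [← Nat.factorial_succ]
    have := Nat.choose_mul_factorial_mul_factorial (Nat.succ_le_succ hk)
    simpa [Nat.succ_sub_succ] using this
  have f2 : (n + m).choose n * n ! * m ! = (n + m)! := by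
    have := Nat.choose_mul_factorial_mul_factorial (Nat.le_add_right n m)
    simpa using this
  have f3 : (m + k).choose k * k ! * m ! = (m + k)! := by
    have := Nat.choose_mul_factorial_mul_factorial (Nat.le_add_left k m)
    simpa using this
  have f4 : (n + m + 1).choose (n - k) * (n - k)! * ((m + 1 + k) * (m + k)!) = (n + m + 1)! := by
    have h1 : n - k ≤ n + m + 1 := by omega
    have := Nat.choose_mul_factorial_mul_factorial h1
    have h2 : n + m + 1 - (n - k) = m + k + 1 := by omega
    rw [h2] at this
    rw [show (m + 1 + k) * (m + k)! = (m + k + 1)! by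
      rw [Nat.factorial_succ]; ring]
    exact this
  apply Nat.eq_of_mul_eq_mul_right (show 0 < k ! * (n - k)! * n ! * (m !) by positivity)
  calc (k + 1) * (n + m + 1) * ((n + 1).choose (k + 1) * (n + m).choose n) *
        (k ! * (n - k)! * n ! * m !)
      = ((n + 1).choose (k + 1) * ((k + 1) * k !) * (n - k)!) *
          ((n + m + 1) * ((n + m).choose n * n ! * m !)) := by ring
    _ = (n + 1)! * ((n + m + 1) * (n + m)!) := by rw [f1, f2]
    _ = (n + 1)! * (n + m + 1)! := by rw [← Nat.factorial_succ]
    _ = (n + 1)! * ((n + m + 1).choose (n - k) * (n - k)! * ((m + 1 + k) * (m + k)!)) := by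
        rw [f4]
    _ = (n + 1)! * ((n + m + 1).choose (n - k) * (n - k)! *
          ((m + 1 + k) * ((m + k).choose k * k ! * m !))) := by rw [f3]
    _ = (n + 1) * (m + 1 + k) * ((m + k).choose k * (n + m + 1).choose (n - k)) *
        (k ! * (n - k)! * n ! * m !) := by rw [Nat.factorial_succ]; ring

/-- `binom(n+1,k+1)·binom(n+r−1,n) ≥ binom(r+k−1,k)·binom(n+r,n−k)`, with
equality iff `k = n` or `r = 1`: the redundant set `X_r^k(T)` is minimal exactly in these
cases. -/
theorem card_redundant_ge_dim {n k r : ℕ} (hn : 1 ≤ n) (hr : 1 ≤ r) (hk : k ≤ n) :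
    (r + k - 1).choose k * (n + r).choose (n - k) ≤
      (n + 1).choose (k + 1) * (n + r - 1).choose n ∧
    ((n + 1).choose (k + 1) * (n + r - 1).choose n =
        (r + k - 1).choose k * (n + r).choose (n - k) ↔ k = n ∨ r = 1) := by
  obtain ⟨m, rfl⟩ : ∃ m, r = m + 1 := ⟨r - 1, by omega⟩
  obtain ⟨a, rfl⟩ : ∃ a, n = k + a := ⟨n - k, by omega⟩
  have e1 : k + a + (m + 1) - 1 = k + a + m := by omega
  have e2 : m + 1 + k - 1 = m + k := by omega
  have e3 : k + a + (m + 1) = k + a + m + 1 := by omega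
  have e4 : k + a - k = a := by omega
  rw [e1, e2, e3, e4]
  have key := key_id (k + a) k m (Nat.le_add_right k a)
  rw [Nat.add_sub_cancel_left] at key
  -- key : (k+1)*(k+a+m+1) * (C(k+a+1,k+1)*C(k+a+m,k+a)) = (k+a+1)*(m+1+k)*(C(m+k,k)*C(k+a+m+1,a))
  set A := (k + a + 1).choose (k + 1) * (k + a + m).choose (k + a) with hA
  set B := (m + k).choose k * (k + a + m + 1).choose a with hB
  have hBpos : 0 < B := by
    apply Nat.mul_pos
    · exact Nat.choose_pos (Nat.le_add_left k m)
    · exact Nat.choose_pos (by omega)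
  have hcoef : (k + 1) * (k + a + m + 1) ≤ (k + a + 1) * (m + 1 + k) := by nlinarith [Nat.zero_le (a * m)]
  constructor
  · -- B ≤ A
    have h1 : (k + 1) * (k + a + m + 1) * B ≤ (k + 1) * (k + a + m + 1) * A := by
      rw [key]
      exact Nat.mul_le_mul_right B hcoef
    exact Nat.le_of_mul_le_mul_left h1 (by positivity)
  · constructor
    · intro hAB
      rw [hAB] at key
      have hc : (k + 1) * (k + a + m + 1) = (k + a + 1) * (m + 1 + k) :=
        Nat.eq_of_mul_eq_mul_right hBpos key
      have ham : a * m = 0 := by nlinarith [hc]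
      rcases Nat.mul_eq_zero.mp ham with h | h
      · left; omega
      · right; omega
    · rintro (h | h)
      · -- k = k + a, so a = 0
        have ha : a = 0 := by omega
        subst ha
        simp only [hA, hB, Nat.add_zero, Nat.choose_self, Nat.choose_zero_right,
          Nat.one_mul, Nat.mul_one]
        rw [Nat.add_comm k m]
      · have hm : m = 0 := by omega
        subst hm
        simp only [hA, hB, Nat.add_zero, Nat.zero_add, Nat.choose_self, Nat.mul_one, Nat.one_mul]
        have := Nat.choose_symm (show a ≤ k + a + 1 by omega)
        rw [show k + a + 1 - a = k + 1 by omega] at this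
        rw [← this]
end
end

section
/- (Generic unisolvence.) Let n ≥ 1, 1 ≤ k ≤ n and r ≥ 1, set N := binom(r+k−1, k)·binom(n+r, n−k), and fix a basis (ω_1,…,ω_N) of P_r^− Λ^k(T). Call a collection S = (s_1,…,s_N) of N ordered affine k-simplices in ℝ^n, identified with a point of ((ℝ^n)^{k+1})^N via the vertices of each s_i, unisolvent if the N×N Vandermonde matrix V with entries V_{ij} = ∫_{s_i} ω_j is invertible. Then the set of unisolvent collections is open and dense in ((ℝ^n)^{k+1})^N ≅ ℝ^{n(k+1)N}. In particular, every non-unisolvent collection can be perturbed by an arbitrarily small amount to obtain a unisolvent one. -/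
open MeasureTheory Matrix

noncomputable section

namespace GUaux

/-- `f` is a polynomial function of the coordinates. -/
def PF {ι : Type*} (f : (ι → ℝ) → ℝ) : Prop :=
  ∃ P : MvPolynomial ι ℝ, ∀ x, f x = MvPolynomial.eval x P

variable {ι κ : Type*}

lemma PF.const (c : ℝ) : PF (fun _ : ι → ℝ => c) := ⟨MvPolynomial.C c, by simp⟩

lemma PF.zero : PF (fun _ : ι → ℝ => (0:ℝ)) := PF.const 0

lemma PF.X (i : ι) : PF (fun x : ι → ℝ => x i) := ⟨MvPolynomial.X i, by simp⟩

lemma PF.add {f g : (ι → ℝ) → ℝ} (hf : PF f) (hg : PF g) : PF (fun x => f x + g x) := by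
  obtain ⟨P, hP⟩ := hf; obtain ⟨Q, hQ⟩ := hg
  exact ⟨P + Q, fun x => by simp [hP, hQ]⟩

lemma PF.mul {f g : (ι → ℝ) → ℝ} (hf : PF f) (hg : PF g) : PF (fun x => f x * g x) := by
  obtain ⟨P, hP⟩ := hf; obtain ⟨Q, hQ⟩ := hg
  exact ⟨P * Q, fun x => by simp [hP, hQ]⟩

lemma PF.smul {f : (ι → ℝ) → ℝ} (c : ℝ) (hf : PF f) : PF (fun x => c * f x) :=
  (PF.const c).mul hf

lemma PF.sub {f g : (ι → ℝ) → ℝ} (hf : PF f) (hg : PF g) : PF (fun x => f x - g x) := by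
  obtain ⟨P, hP⟩ := hf; obtain ⟨Q, hQ⟩ := hg
  exact ⟨P - Q, fun x => by simp [hP, hQ]⟩

lemma PF.sum {A : Type*} (s : Finset A) (f : A → (ι → ℝ) → ℝ)
    (hf : ∀ a ∈ s, PF (f a)) : PF (fun x => ∑ a ∈ s, f a x) := by
  classical
  induction s using Finset.cons_induction with
  | empty => simpa using PF.zero
  | cons a s ha ih =>
      simp only [Finset.sum_cons]
      exact (hf a (by simp)).add (ih fun b hb => hf b (by simp [hb]))

lemma PF.prod {A : Type*} (s : Finset A) (f : A → (ι → ℝ) → ℝ)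
    (hf : ∀ a ∈ s, PF (f a)) : PF (fun x => ∏ a ∈ s, f a x) := by
  classical
  induction s using Finset.cons_induction with
  | empty => simpa using PF.const 1
  | cons a s ha ih =>
      simp only [Finset.prod_cons]
      exact (hf a (by simp)).mul (ih fun b hb => hf b (by simp [hb]))

lemma eval_aeval' (Q : ι → MvPolynomial κ ℝ) (P : MvPolynomial ι ℝ) (w : κ → ℝ) :
    MvPolynomial.eval w (MvPolynomial.aeval Q P)
      = MvPolynomial.eval (fun a => MvPolynomial.eval w (Q a)) P := by
  have : MvPolynomial.eval w (MvPolynomial.aeval Q P)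
      = MvPolynomial.aeval (fun a => MvPolynomial.aeval w (Q a)) P := by
    rw [MvPolynomial.aeval_eq_bind₁, ← MvPolynomial.aeval_bind₁]
    rfl
  rw [this]
  rfl

lemma PF.comp {f : (ι → ℝ) → ℝ} (hf : PF f) (g : ι → (κ → ℝ) → ℝ)
    (hg : ∀ a, PF (g a)) : PF (fun w => f (fun a => g a w)) := by
  obtain ⟨P, hP⟩ := hf
  choose Q hQ using hg
  refine ⟨MvPolynomial.aeval Q P, fun w => ?_⟩
  rw [eval_aeval']
  show f (fun a => g a w) = _
  rw [hP]
  have : (fun a => g a w) = fun a => MvPolynomial.eval w (Q a) := funext fun a => hQ a w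
  rw [this]

lemma PF.rename {f : (ι → ℝ) → ℝ} (hf : PF f) (m : ι → κ) :
    PF (fun w : κ → ℝ => f (fun a => w (m a))) :=
  hf.comp _ (fun a => PF.X (m a))

lemma PF.continuous_eval (P : MvPolynomial ι ℝ) :
    Continuous fun x : ι → ℝ => MvPolynomial.eval x P := by
  induction P using MvPolynomial.induction_on with
  | C c => simpa using continuous_const
  | add p q hp hq => simp only [_root_.map_add]; exact hp.add hq
  | mul_X p i hp => simp only [_root_.map_mul, MvPolynomial.eval_X]; exact hp.mul (continuous_apply i)

lemma PF.continuous {f : (ι → ℝ) → ℝ} (hf : PF f) : Continuous f := by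
  obtain ⟨P, hP⟩ := hf
  have : f = fun x => MvPolynomial.eval x P := funext hP
  rw [this]; exact PF.continuous_eval P

lemma PF.analyticAt [Fintype ι] {f : (ι → ℝ) → ℝ} (hf : PF f) (x : ι → ℝ) :
    AnalyticAt ℝ f x := by
  obtain ⟨P, hP⟩ := hf
  have : f = fun x => MvPolynomial.eval x P := funext hP
  rw [this]; clear hP this
  induction P using MvPolynomial.induction_on with
  | C c => simpa using analyticAt_const
  | add p q hp hq => simp only [_root_.map_add]; exact hp.add hq
  | mul_X p i hp =>
      simp only [_root_.map_mul, MvPolynomial.eval_X]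
      exact hp.mul ((ContinuousLinearMap.proj i : ((ι → ℝ) →L[ℝ] ℝ)).analyticAt x)

end GUaux

namespace GUaux
open MvPolynomial

variable {n k : ℕ}

/-- index type for joint variables (x, u) -/
abbrev XU (n k : ℕ) := Sum (Fin n) (Fin k × Fin n)

/-- jointly polynomial form -/
def JP (ω : Form n k) : Prop :=
  PF (fun z : XU n k → ℝ => ω (fun a => z (.inl a)) (fun j c => z (.inr (j, c))))

/-- degree-k homogeneity in the vectors -/
def Hom (k : ℕ) (ω : Form n k) : Prop :=
  ∀ (x : Fin n → ℝ) (u : Fin k → Fin n → ℝ) (c : ℝ),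
    ω x (fun j => c • u j) = c ^ k * ω x u

lemma JP.add {ω η : Form n k} (hω : JP ω) (hη : JP η) : JP (ω + η) := PF.add hω hη

lemma JP.smul {ω : Form n k} (c : ℝ) (hω : JP ω) : JP (c • ω) := PF.smul c hω

lemma JP.zero : JP (0 : Form n k) := PF.zero

lemma Hom.add {ω η : Form n k} (hω : Hom k ω) (hη : Hom k η) : Hom k (ω + η) := by
  intro x u c
  have h1 := hω x u c; have h2 := hη x u c
  show ω x _ + η x _ = _
  rw [h1, h2]; ring_nf
  show _ = c ^ k * (ω x u + η x u)
  ring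

lemma Hom.smul {ω : Form n k} (c : ℝ) (hω : Hom k ω) : Hom k (c • ω) := by
  intro x u d
  have h1 := hω x u d
  show c * ω x _ = _
  rw [h1]
  show _ = d ^ k * (c * ω x u)
  ring

lemma Hom.zero : Hom k (0 : Form n k) := by intro x u c; simp

/-- linear functionals are PF after coordinate assembly -/
lemma PF_linearMap {ι : Type*} [Fintype ι] (l : (Fin n → ℝ) →ₗ[ℝ] ℝ) (m : Fin n → ι) :
    PF (fun z : ι → ℝ => l (fun a => z (m a))) := by
  have key : ∀ z : ι → ℝ, l (fun a => z (m a))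
      = ∑ a : Fin n, z (m a) * l (fun j => if a = j then 1 else 0) := by
    intro z
    rw [LinearMap.pi_apply_eq_sum_univ l (fun a => z (m a))]
    simp [smul_eq_mul]
  have : (fun z : ι → ℝ => l (fun a => z (m a)))
      = fun z => ∑ a : Fin n, z (m a) * l (fun j => if a = j then 1 else 0) := funext key
  rw [this]
  exact PF.sum _ _ (fun a _ => (PF.X (m a)).mul (PF.const _))

lemma PF_affineMap {ι : Type*} [Fintype ι] (l : (Fin n → ℝ) →ᵃ[ℝ] ℝ) (m : Fin n → ι) :
    PF (fun z : ι → ℝ => l (fun a => z (m a))) := by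
  have : (fun z : ι → ℝ => l (fun a => z (m a)))
      = fun z => l.linear (fun a => z (m a)) + l 0 := by
    funext z
    have h := congrFun (AffineMap.decomp l) (fun a => z (m a))
    simpa using h
  rw [this]
  exact (PF_linearMap l.linear m).add (PF.const _)

lemma PF_det {ι : Type*} {M : ℕ} (E : Fin M → Fin M → (ι → ℝ) → ℝ)
    (hE : ∀ i j, PF (E i j)) :
    PF (fun z => (Matrix.of fun i j => E i j z).det) := by
  have : (fun z => (Matrix.of fun i j => E i j z).det)
      = fun z => ∑ τ : Equiv.Perm (Fin M),
          ((Equiv.Perm.sign τ : ℤ) : ℝ) * ∏ i, E (τ i) i z := by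
    funext z
    rw [Matrix.det_apply]
    refine Finset.sum_congr rfl fun τ _ => ?_
    rw [Units.smul_def, zsmul_eq_mul]
    push_cast
    rfl
  rw [this]
  exact PF.sum _ _ fun τ _ => (PF.const _).mul (PF.prod _ _ fun i _ => hE (τ i) i)

lemma JP_whitney (lam : Fin (n + 1) → ((Fin n → ℝ) →ᵃ[ℝ] ℝ))
    (σ : Fin (k + 1) → Fin (n + 1)) : JP (whitney lam σ) := by
  unfold JP whitney
  refine PF.sum _ _ fun i _ => ?_
  refine ((PF.const _).mul (PF_affineMap (lam (σ i)) Sum.inl)).mul ?_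
  exact PF_det _ fun a b => PF_linearMap ((lam (σ (i.succAbove a))).linear) (fun c => Sum.inr (b, c))

lemma JP_gen (lam : Fin (n + 1) → ((Fin n → ℝ) →ᵃ[ℝ] ℝ))
    (σ : Fin (k + 1) → Fin (n + 1)) (p : MvPolynomial (Fin n) ℝ) :
    JP (fun x u => MvPolynomial.eval x p * whitney lam σ x u : Form n k) := by
  refine PF.mul ?_ (JP_whitney lam σ)
  refine ⟨MvPolynomial.rename Sum.inl p, fun z => ?_⟩
  rw [MvPolynomial.eval_rename]
  rfl

lemma Hom_whitney (lam : Fin (n + 1) → ((Fin n → ℝ) →ᵃ[ℝ] ℝ))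
    (σ : Fin (k + 1) → Fin (n + 1)) : Hom k (whitney lam σ) := by
  intro x u c
  unfold whitney
  rw [Finset.mul_sum]
  refine Finset.sum_congr rfl fun i _ => ?_
  have : (Matrix.of fun a b : Fin k => (lam (σ (i.succAbove a))).linear (c • u b))
      = c • (Matrix.of fun a b : Fin k => (lam (σ (i.succAbove a))).linear (u b)) := by
    ext a b
    simp [Matrix.smul_apply, _root_.map_smul, smul_eq_mul]
  rw [this, Matrix.det_smul]
  simp only [Fintype.card_fin]
  ring

lemma Hom_gen (lam : Fin (n + 1) → ((Fin n → ℝ) →ᵃ[ℝ] ℝ))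
    (σ : Fin (k + 1) → Fin (n + 1)) (p : MvPolynomial (Fin n) ℝ) :
    Hom k (fun x u => MvPolynomial.eval x p * whitney lam σ x u : Form n k) := by
  intro x u c
  show MvPolynomial.eval x p * whitney lam σ x _ = _
  rw [Hom_whitney lam σ x u c]
  ring

lemma mem_JP {r : ℕ} (lam : Fin (n + 1) → ((Fin n → ℝ) →ᵃ[ℝ] ℝ))
    {ω : Form n k} (hω : ω ∈ PrMinus n k r lam) : JP ω := by
  induction hω using Submodule.span_induction with
  | mem η hη =>
      obtain ⟨p, σ, _, _, rfl⟩ := hη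
      exact JP_gen lam σ p
  | zero => exact JP.zero
  | add η ρ _ _ h1 h2 => exact h1.add h2
  | smul c η _ h1 => exact JP.smul c h1

lemma mem_Hom {r : ℕ} (lam : Fin (n + 1) → ((Fin n → ℝ) →ᵃ[ℝ] ℝ))
    {ω : Form n k} (hω : ω ∈ PrMinus n k r lam) : Hom k ω := by
  induction hω using Submodule.span_induction with
  | mem η hη =>
      obtain ⟨p, σ, _, _, rfl⟩ := hη
      exact Hom_gen lam σ p
  | zero => exact Hom.zero
  | add η ρ _ _ h1 h2 => exact h1.add h2
  | smul c η _ h1 => exact Hom.smul c h1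

/-- joint continuity of a JP form along continuous parameter maps -/
lemma JP.continuous_comp {ω : Form n k} (hω : JP ω) {E : Type*} [TopologicalSpace E]
    {m1 : E → Fin n → ℝ} {m2 : E → Fin k → Fin n → ℝ}
    (h1 : Continuous m1) (h2 : Continuous m2) :
    Continuous (fun e => ω (m1 e) (m2 e)) := by
  have hc := hω.continuous
  have : (fun e => ω (m1 e) (m2 e))
      = (fun z : XU n k → ℝ => ω (fun a => z (.inl a)) (fun j c => z (.inr (j, c)))) ∘
        (fun e => Sum.elim (m1 e) (fun q : Fin k × Fin n => m2 e q.1 q.2)) := by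
    funext e; rfl
  rw [this]
  refine hc.comp ?_
  refine continuous_pi fun v => ?_
  cases v with
  | inl a => exact (continuous_apply a).comp h1
  | inr q => exact ((continuous_apply q.2).comp ((continuous_apply q.1).comp h2))

end GUaux

namespace GUaux
open MvPolynomial

variable {n k : ℕ}

lemma isClosed_stdSimplexSet (k : ℕ) : IsClosed (stdSimplexSet k) := by
  have : stdSimplexSet k
      = (⋂ j : Fin k, {x : Fin k → ℝ | 0 ≤ x j}) ∩ {x | ∑ j, x j ≤ 1} := by
    ext x; simp [stdSimplexSet, Set.mem_iInter]
  rw [this]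
  refine IsClosed.inter (isClosed_iInter fun j => ?_) ?_
  · exact isClosed_le continuous_const (continuous_apply j)
  · exact isClosed_le (continuous_finset_sum _ fun j _ => continuous_apply j) continuous_const

lemma isCompact_stdSimplexSet (k : ℕ) : IsCompact (stdSimplexSet k) := by
  refine Metric.isCompact_of_isClosed_isBounded (isClosed_stdSimplexSet k) ?_
  rw [Metric.isBounded_iff_subset_closedBall 0]
  refine ⟨1, fun x hx => ?_⟩
  obtain ⟨h0, h1⟩ := hx
  rw [Metric.mem_closedBall, dist_zero_right]
  rw [pi_norm_le_iff_of_nonneg zero_le_one]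
  intro j
  rw [Real.norm_eq_abs, abs_le]
  constructor
  · linarith [h0 j]
  · calc x j ≤ ∑ i, x i := Finset.single_le_sum (fun i _ => h0 i) (Finset.mem_univ j)
      _ ≤ 1 := h1

lemma measurableSet_stdSimplexSet (k : ℕ) : MeasurableSet (stdSimplexSet k) :=
  (isClosed_stdSimplexSet k).measurableSet

lemma volume_stdSimplexSet_pos (k : ℕ) : 0 < volume (stdSimplexSet k) := by
  have hU : IsOpen {x : Fin k → ℝ | (∀ j, 0 < x j) ∧ ∑ j, x j < 1} := by
    have : {x : Fin k → ℝ | (∀ j, 0 < x j) ∧ ∑ j, x j < 1}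
        = (⋂ j : Fin k, {x : Fin k → ℝ | 0 < x j}) ∩ {x | ∑ j, x j < 1} := by
      ext x; simp [Set.mem_iInter]
    rw [this]
    refine IsOpen.inter (isOpen_iInter_of_finite fun j => ?_) ?_
    · exact isOpen_lt continuous_const (continuous_apply j)
    · exact isOpen_lt (continuous_finset_sum _ fun j _ => continuous_apply j) continuous_const
  have hne : ((fun _ => (1:ℝ)/(k+2)) : Fin k → ℝ) ∈
      {x : Fin k → ℝ | (∀ j, 0 < x j) ∧ ∑ j, x j < 1} := by
    constructor
    · intro j; positivity
    · rw [Finset.sum_const, Finset.card_univ, Fintype.card_fin]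
      rw [nsmul_eq_mul, mul_one_div, div_lt_one (by positivity)]
      linarith [Nat.cast_nonneg (α := ℝ) k]
  have hsub : {x : Fin k → ℝ | (∀ j, 0 < x j) ∧ ∑ j, x j < 1} ⊆ stdSimplexSet k :=
    fun x hx => ⟨fun j => le_of_lt (hx.1 j), le_of_lt hx.2⟩
  calc 0 < volume {x : Fin k → ℝ | (∀ j, 0 < x j) ∧ ∑ j, x j < 1} :=
        hU.measure_pos volume ⟨_, hne⟩
    _ ≤ volume (stdSimplexSet k) := measure_mono hsub

lemma volume_stdSimplexSet_lt_top (k : ℕ) : volume (stdSimplexSet k) < ⊤ :=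
  (isCompact_stdSimplexSet k).measure_lt_top

/-- the integrand of `simpIntegral` -/
lemma integrableOn_integrand {ω : Form n k} (hω : JP ω) (p : Fin (k + 1) → (Fin n → ℝ)) :
    IntegrableOn
      (fun x => ω (p 0 + ∑ j : Fin k, x j • (p j.succ - p 0)) (fun j => p j.succ - p 0))
      (stdSimplexSet k) volume := by
  refine ContinuousOn.integrableOn_compact (isCompact_stdSimplexSet k) ?_
  refine Continuous.continuousOn ?_
  refine hω.continuous_comp ?_ continuous_const
  refine continuous_const.add (continuous_finset_sum _ fun j _ => ?_)
  exact ((continuous_apply j).smul continuous_const)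

/-- separation: a JP+Hom form with all simplex integrals zero is zero. -/
lemma eq_zero_of_forall_simpIntegral_eq_zero {ω : Form n k} (hJP : JP ω) (hHom : Hom k ω)
    (h : ∀ p : Fin (k + 1) → (Fin n → ℝ), simpIntegral ω p = 0) : ω = 0 := by
  funext x u
  -- the parametrized integrand
  set g : ℝ → (Fin k → ℝ) → ℝ := fun ε y => ω (x + ε • ∑ j, y j • u j) u with hg
  have hgcont : Continuous (fun q : ℝ × (Fin k → ℝ) => g q.1 q.2) := by
    refine hJP.continuous_comp ?_ continuous_const
    refine continuous_const.add ?_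
    exact (continuous_fst.smul (continuous_finset_sum _ fun j _ =>
      ((continuous_apply j).comp continuous_snd).smul continuous_const))
  -- all integrals vanish for ε > 0
  have key : ∀ ε : ℝ, 0 < ε → ∫ y in stdSimplexSet k, g ε y = 0 := by
    intro ε hε
    have hp := h (Fin.cases x (fun j => x + ε • u j))
    have hrw : simpIntegral ω (Fin.cases x (fun j => x + ε • u j))
        = ε ^ k * ∫ y in stdSimplexSet k, g ε y := by
      unfold simpIntegral
      rw [← MeasureTheory.integral_const_mul]
      refine MeasureTheory.setIntegral_congr_fun (measurableSet_stdSimplexSet k) ?_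
      intro y _
      simp only [Fin.cases_zero, Fin.cases_succ]
      have e1 : ∀ j : Fin k, x + ε • u j - x = ε • u j := by intro j; abel
      simp only [e1]
      have e3 : ∑ j : Fin k, y j • (ε • u j) = ε • ∑ j, y j • u j := by
        rw [Finset.smul_sum]
        exact Finset.sum_congr rfl fun j _ => smul_comm _ _ _
      rw [e3, hHom (x + ε • ∑ j, y j • u j) u ε]
    rw [hrw] at hp
    have hεk : ε ^ k ≠ 0 := pow_ne_zero _ (ne_of_gt hε)
    exact (mul_eq_zero.mp hp).resolve_left hεk
  -- dominating bound on [0,1] × Δ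
  obtain ⟨C, hC⟩ := (IsCompact.exists_bound_of_continuousOn
    ((isCompact_Icc (a := (0:ℝ)) (b := 1)).prod (isCompact_stdSimplexSet k))
    hgcont.continuousOn)
  -- apply dominated convergence along εₘ = 1/(m+1)
  have hlim : Filter.Tendsto (fun m : ℕ => ∫ y in stdSimplexSet k, g (1/(m+1)) y)
      Filter.atTop (nhds (∫ y in stdSimplexSet k, g 0 y)) := by
    refine MeasureTheory.tendsto_integral_of_dominated_convergence (fun _ => C) ?_ ?_ ?_ ?_
    · intro m
      exact (hgcont.comp (Continuous.prodMk_right _)).aestronglyMeasurable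
    · exact MeasureTheory.integrableOn_const (volume_stdSimplexSet_lt_top k).ne
    · intro m
      refine (MeasureTheory.ae_restrict_iff' (measurableSet_stdSimplexSet k)).mpr ?_
      refine Filter.Eventually.of_forall fun y hy => ?_
      refine hC (1/(m+1), y) ⟨?_, hy⟩
      constructor
      · positivity
      · rw [div_le_one (by positivity)]
        have : (1:ℝ) ≤ m + 1 := by
          have : (0:ℝ) ≤ m := Nat.cast_nonneg m
          linarith
        exact this
    · refine Filter.Eventually.of_forall fun y => ?_
      have : Filter.Tendsto (fun m : ℕ => (1:ℝ)/(m+1)) Filter.atTop (nhds 0) :=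
        tendsto_one_div_add_atTop_nhds_zero_nat
      have hcy : Continuous fun ε : ℝ => g ε y :=
        hgcont.comp (continuous_id.prodMk continuous_const)
      exact (hcy.tendsto 0).comp this
  have hzero : ∀ m : ℕ, ∫ y in stdSimplexSet k, g (1/(m+1)) y = 0 := by
    intro m
    exact key _ (by positivity)
  have h0 : ∫ y in stdSimplexSet k, g 0 y = 0 := by
    have := hlim
    simp only [hzero] at this
    exact (tendsto_nhds_unique tendsto_const_nhds this).symm
  have hg0 : ∀ y : Fin k → ℝ, g 0 y = ω x u := by
    intro y
    simp [hg]
  rw [MeasureTheory.setIntegral_congr_fun (measurableSet_stdSimplexSet k)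
    (fun y _ => hg0 y)] at h0
  rw [MeasureTheory.setIntegral_const] at h0
  have hvol : (volume (stdSimplexSet k)).toReal ≠ 0 := by
    refine ne_of_gt ?_
    exact ENNReal.toReal_pos (ne_of_gt (volume_stdSimplexSet_pos k))
      (ne_of_lt (volume_stdSimplexSet_lt_top k))
  have := smul_eq_zero.mp h0
  rcases this with h | h
  · exact absurd h hvol
  · show ω x u = 0
    exact h

end GUaux

namespace GUaux
open MvPolynomial

variable {n k : ℕ}

lemma integral_poly_param {κ : Type*} [Fintype κ] (k : ℕ)
    (P : MvPolynomial (Sum (Fin k) κ) ℝ) :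
    ∃ Q : MvPolynomial κ ℝ, ∀ w : κ → ℝ,
      ∫ y in stdSimplexSet k, MvPolynomial.eval (Sum.elim y w) P
        = MvPolynomial.eval w Q := by
  classical
  refine ⟨∑ d ∈ P.support,
    MvPolynomial.C (P.coeff d * ∫ y in stdSimplexSet k, ∏ j : Fin k, y j ^ d (Sum.inl j)) *
    ∏ c : κ, MvPolynomial.X c ^ d (Sum.inr c), fun w => ?_⟩
  have hev : ∀ y : Fin k → ℝ, MvPolynomial.eval (Sum.elim y w) P
      = ∑ d ∈ P.support, P.coeff d *
        ((∏ j : Fin k, y j ^ d (Sum.inl j)) * (∏ c : κ, w c ^ d (Sum.inr c))) := by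
    intro y
    rw [MvPolynomial.eval_eq']
    refine Finset.sum_congr rfl fun d _ => ?_
    rw [Fintype.prod_sum_type]
    rfl
  rw [MeasureTheory.setIntegral_congr_fun (measurableSet_stdSimplexSet k)
    (fun y _ => hev y)]
  have hint : ∀ d : (Sum (Fin k) κ) →₀ ℕ, IntegrableOn
      (fun y : Fin k → ℝ => P.coeff d *
        ((∏ j : Fin k, y j ^ d (Sum.inl j)) * (∏ c : κ, w c ^ d (Sum.inr c))))
      (stdSimplexSet k) volume := by
    intro d
    refine ContinuousOn.integrableOn_compact (isCompact_stdSimplexSet k) ?_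
    refine Continuous.continuousOn ?_
    exact continuous_const.mul ((continuous_finset_prod _ fun j _ =>
      (continuous_apply j).pow _).mul continuous_const)
  rw [MeasureTheory.integral_finset_sum _ (fun d _ => hint d)]
  rw [map_sum]
  refine Finset.sum_congr rfl fun d _ => ?_
  have : (fun y : Fin k → ℝ => P.coeff d *
        ((∏ j : Fin k, y j ^ d (Sum.inl j)) * (∏ c : κ, w c ^ d (Sum.inr c))))
      = fun y => (P.coeff d * ∏ c : κ, w c ^ d (Sum.inr c)) *
          (∏ j : Fin k, y j ^ d (Sum.inl j)) := by
    funext y; ring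
  rw [this, MeasureTheory.integral_const_mul]
  simp only [_root_.map_mul, MvPolynomial.eval_C, MvPolynomial.eval_prod,
    _root_.map_pow, MvPolynomial.eval_X]
  ring

/-- variables for the vertices of one simplex -/
abbrev PV (n k : ℕ) := Fin (k + 1) × Fin n

lemma simpIntegral_poly {ω : Form n k} (hω : JP ω) :
    ∃ Q : MvPolynomial (PV n k) ℝ, ∀ p : Fin (k + 1) → (Fin n → ℝ),
      simpIntegral ω p = MvPolynomial.eval (fun q : PV n k => p q.1 q.2) Q := by
  classical
  obtain ⟨P, hP⟩ := hω
  -- substitution polynomials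
  set sub : XU n k → MvPolynomial (Sum (Fin k) (PV n k)) ℝ := fun v =>
    Sum.rec
      (fun a => MvPolynomial.X (Sum.inr (0, a)) + ∑ j : Fin k, MvPolynomial.X (Sum.inl j) *
        (MvPolynomial.X (Sum.inr (j.succ, a)) - MvPolynomial.X (Sum.inr ((0 : Fin (k+1)), a))))
      (fun q => MvPolynomial.X (Sum.inr (q.1.succ, q.2)) -
        MvPolynomial.X (Sum.inr ((0 : Fin (k+1)), q.2))) v with hsub
  obtain ⟨Q, hQ⟩ := integral_poly_param k (MvPolynomial.aeval sub P)
  refine ⟨Q, fun p => ?_⟩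
  rw [← hQ]
  unfold simpIntegral
  refine MeasureTheory.setIntegral_congr_fun (measurableSet_stdSimplexSet k) ?_
  intro y _
  show ω (p 0 + ∑ j : Fin k, y j • (p j.succ - p 0)) (fun j => p j.succ - p 0)
      = MvPolynomial.eval (Sum.elim y (fun q : PV n k => p q.1 q.2)) (MvPolynomial.aeval sub P)
  rw [eval_aeval']
  have hz : ∀ v : XU n k, MvPolynomial.eval (Sum.elim y (fun q : PV n k => p q.1 q.2)) (sub v)
      = Sum.elim (fun a => (p 0 + ∑ j : Fin k, y j • (p j.succ - p 0)) a)
          (fun q : Fin k × Fin n => (p q.1.succ - p 0) q.2) v := by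
    intro v
    cases v with
    | inl a =>
        simp only [hsub, map_add, _root_.map_mul, map_sub, map_sum, MvPolynomial.eval_X]
        simp [Pi.add_apply, Pi.sub_apply, Finset.sum_apply, Pi.smul_apply, smul_eq_mul]
    | inr q =>
        simp only [hsub, map_sub, MvPolynomial.eval_X]
        simp [Pi.sub_apply]
  have := hP (fun v => MvPolynomial.eval (Sum.elim y (fun q : PV n k => p q.1 q.2)) (sub v))
  rw [← this]
  congr 1
  · funext a
    have := hz (Sum.inl a)
    simpa using this.symm
  · funext j c
    have := hz (Sum.inr (j, c))
    simpa using this.symm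

end GUaux

namespace GUaux
open MvPolynomial

variable {n k : ℕ}

lemma simpIntegral_add {ω η : Form n k} (hω : JP ω) (hη : JP η)
    (p : Fin (k + 1) → (Fin n → ℝ)) :
    simpIntegral (ω + η) p = simpIntegral ω p + simpIntegral η p := by
  unfold simpIntegral
  rw [← MeasureTheory.integral_add (integrableOn_integrand hω p) (integrableOn_integrand hη p)]
  rfl

lemma simpIntegral_smul (c : ℝ) (ω : Form n k) (p : Fin (k + 1) → (Fin n → ℝ)) :
    simpIntegral (c • ω) p = c * simpIntegral ω p := by
  unfold simpIntegral
  rw [← MeasureTheory.integral_const_mul]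
  rfl

variable {r : ℕ} {lam : Fin (n + 1) → ((Fin n → ℝ) →ᵃ[ℝ] ℝ)}

/-- the integration functional as an element of the dual of `PrMinus` -/
noncomputable def simpDual (lam : Fin (n + 1) → ((Fin n → ℝ) →ᵃ[ℝ] ℝ)) (r : ℕ)
    (p : Fin (k + 1) → (Fin n → ℝ)) : Module.Dual ℝ (PrMinus n k r lam) where
  toFun ω := simpIntegral ω.val p
  map_add' ω η := by
    show simpIntegral ((ω + η : PrMinus n k r lam) : Form n k) p
        = simpIntegral ω.val p + simpIntegral η.val p
    rw [Submodule.coe_add, simpIntegral_add (mem_JP lam ω.2) (mem_JP lam η.2)]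
  map_smul' c ω := by
    show simpIntegral ((c • ω : PrMinus n k r lam) : Form n k) p = _
    rw [Submodule.coe_smul, simpIntegral_smul]
    rfl

lemma exists_unisolvent {N : ℕ} (b : Module.Basis (Fin N) ℝ (PrMinus n k r lam)) :
    ∃ S : Fin N → Fin (k + 1) → (Fin n → ℝ),
      (Matrix.of fun i j : Fin N => simpIntegral (b j).val (S i)).det ≠ 0 := by
  classical
  haveI : Module.Finite ℝ (PrMinus n k r lam) := Module.Finite.of_basis b
  set φ : (Fin (k + 1) → (Fin n → ℝ)) → Module.Dual ℝ (PrMinus n k r lam) :=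
    simpDual lam r with hφ
  have hsep : ∀ ω : PrMinus n k r lam, (∀ p, φ p ω = 0) → ω = 0 := by
    intro ω hω
    exact Subtype.ext
      (eq_zero_of_forall_simpIntegral_eq_zero (mem_JP lam ω.2) (mem_Hom lam ω.2) hω)
  set W : Submodule ℝ (Module.Dual ℝ (PrMinus n k r lam)) :=
    Submodule.span ℝ (Set.range φ) with hW
  have hWco : W.dualCoannihilator = ⊥ := by
    rw [Submodule.eq_bot_iff]
    intro ω hωmem
    rw [Submodule.mem_dualCoannihilator] at hωmem
    exact hsep ω fun p => hωmem (φ p) (Submodule.subset_span (Set.mem_range_self p))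
  have hWtop : W = ⊤ := by
    have h1 := Subspace.finrank_add_finrank_dualCoannihilator_eq W
    rw [hWco, finrank_bot] at h1
    refine Submodule.eq_top_of_finrank_eq ?_
    rw [Subspace.dual_finrank_eq]
    omega
  obtain ⟨t, hts, hsp, hli⟩ := exists_linearIndependent ℝ (Set.range φ)
  rw [← hW, hWtop] at hsp
  have htfin : t.Finite := hli.setFinite
  haveI : Fintype t := htfin.fintype
  set Bt : Module.Basis t ℝ (Module.Dual ℝ (PrMinus n k r lam)) :=
    Module.Basis.mk hli (by rw [Subtype.range_coe, hsp]) with hBt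
  have hcard : Fintype.card t = N := by
    have h1 : Module.finrank ℝ (Module.Dual ℝ (PrMinus n k r lam)) = Fintype.card t :=
      Module.finrank_eq_card_basis Bt
    have h2 : Module.finrank ℝ (PrMinus n k r lam) = N := by
      rw [Module.finrank_eq_card_basis b, Fintype.card_fin]
    rw [Subspace.dual_finrank_eq, h2] at h1
    omega
  set e : t ≃ Fin N := Fintype.equivFinOfCardEq hcard with he
  set L : Module.Basis (Fin N) ℝ (Module.Dual ℝ (PrMinus n k r lam)) := Bt.reindex e with hL
  have hLmem : ∀ i : Fin N, ∃ p, φ p = L i := by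
    intro i
    have h3 : L i = ((e.symm i : t) : Module.Dual ℝ (PrMinus n k r lam)) := by
      rw [hL, Module.Basis.reindex_apply, hBt, Module.Basis.mk_apply]
    rw [h3]
    exact hts (e.symm i).2
  choose S hS using hLmem
  refine ⟨S, fun hdet => ?_⟩
  obtain ⟨v, hv0, hmv⟩ := Matrix.exists_mulVec_eq_zero_iff.mpr hdet
  set ωv : PrMinus n k r lam := ∑ j, v j • b j with hωv
  have hωvne : ωv ≠ 0 := by
    intro h
    apply hv0
    have := Fintype.linearIndependent_iff.mp b.linearIndependent v (by rw [← hωv, h])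
    funext j; exact this j
  have hkill : ∀ i : Fin N, L i ωv = 0 := by
    intro i
    have h4 : L i ωv = ∑ j, v j * simpIntegral (b j).val (S i) := by
      rw [hωv, map_sum]
      refine Finset.sum_congr rfl fun j _ => ?_
      rw [_root_.map_smul, ← hS i]
      rfl
    rw [h4]
    have h5 := congrFun hmv i
    simpa [Matrix.mulVec, dotProduct, mul_comm] using h5
  have hall : ∀ l : Module.Dual ℝ (PrMinus n k r lam), l ωv = 0 := by
    intro l
    have hrepr := L.sum_repr l
    rw [← hrepr]
    simp only [LinearMap.coe_sum, Finset.sum_apply, LinearMap.smul_apply]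
    refine Finset.sum_eq_zero fun i _ => ?_
    rw [hkill i, smul_zero]
  exact hωvne ((Module.forall_dual_apply_eq_zero_iff ℝ ωv).mp hall)

end GUaux

/-- (Generic unisolvence.) Fixing a basis of `P_r^- Λ^k(T)`, the set of
collections of `N` ordered `k`-simplices whose Vandermonde matrix `V_{ij} = ∫_{sᵢ} ωⱼ` is
invertible is open and dense in `((ℝⁿ)^{k+1})^N`. -/
theorem generic_unisolvence {n k r : ℕ} (hn : 1 ≤ n) (hk1 : 1 ≤ k) (hk : k ≤ n) (hr : 1 ≤ r)
    (v : Fin (n + 1) → (Fin n → ℝ)) (hv : AffineIndependent ℝ v)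
    (lam : Fin (n + 1) → ((Fin n → ℝ) →ᵃ[ℝ] ℝ))
    (hlam : ∀ i j, lam i (v j) = if i = j then 1 else 0)
    (N : ℕ) (hN : N = (r + k - 1).choose k * (n + r).choose (n - k))
    (b : Module.Basis (Fin N) ℝ (PrMinus n k r lam)) :
    IsOpen {S : Fin N → Fin (k + 1) → (Fin n → ℝ) |
        (Matrix.of fun i j : Fin N => simpIntegral (b j).val (S i)).det ≠ 0} ∧
    Dense {S : Fin N → Fin (k + 1) → (Fin n → ℝ) |
        (Matrix.of fun i j : Fin N => simpIntegral (b j).val (S i)).det ≠ 0} := by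
  classical
  open GUaux in
  -- polynomials representing the integrals
  have hQ : ∀ j : Fin N, ∃ Q : MvPolynomial (GUaux.PV n k) ℝ,
      ∀ p : Fin (k + 1) → (Fin n → ℝ),
        simpIntegral (b j).val p = MvPolynomial.eval (fun q : GUaux.PV n k => p q.1 q.2) Q :=
    fun j => GUaux.simpIntegral_poly (GUaux.mem_JP lam (b j).2)
  choose Q hQ using hQ
  -- the determinant function on flattened coordinates
  set D : ((Fin N × GUaux.PV n k) → ℝ) → ℝ := fun w =>
    (Matrix.of fun i j : Fin N =>
      simpIntegral (b j).val (fun a c => w (i, (a, c)))).det with hD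
  have hPD : GUaux.PF D := by
    refine GUaux.PF_det _ fun i j => ?_
    have : (fun w : (Fin N × GUaux.PV n k) → ℝ =>
        simpIntegral (b j).val (fun a c => w (i, (a, c))))
        = fun w => MvPolynomial.eval (fun q : GUaux.PV n k => w (i, q)) (Q j) := by
      funext w
      rw [hQ j]
    rw [this]
    exact GUaux.PF.rename ⟨Q j, fun _ => rfl⟩ (fun q => (i, q))
  -- the flattening homeomorphism
  set ψ : (Fin N → Fin (k + 1) → (Fin n → ℝ)) ≃ₜ ((Fin N × GUaux.PV n k) → ℝ) :=
    { toFun := fun S q => S q.1 q.2.1 q.2.2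
      invFun := fun w i a c => w (i, (a, c))
      left_inv := fun S => rfl
      right_inv := fun w => rfl
      continuous_toFun := by
        refine continuous_pi fun q => ?_
        exact (continuous_apply q.2.2).comp
          ((continuous_apply q.2.1).comp (continuous_apply q.1))
      continuous_invFun := by
        refine continuous_pi fun i => continuous_pi fun a => continuous_pi fun c => ?_
        exact continuous_apply (i, (a, c)) } with hψ
  have hDS : ∀ S : Fin N → Fin (k + 1) → (Fin n → ℝ),
      (Matrix.of fun i j : Fin N => simpIntegral (b j).val (S i)).det = D (ψ S) := fun S => rfl
  constructor
  · -- openness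
    have hcont : Continuous fun S : Fin N → Fin (k + 1) → (Fin n → ℝ) => D (ψ S) :=
      hPD.continuous.comp ψ.continuous
    have : {S : Fin N → Fin (k + 1) → (Fin n → ℝ) |
        (Matrix.of fun i j : Fin N => simpIntegral (b j).val (S i)).det ≠ 0}
        = (fun S => D (ψ S)) ⁻¹' ({0}ᶜ) := by
      ext S; simp [hDS S]
    rw [this]
    exact (isOpen_compl_singleton).preimage hcont
  · -- density
    rw [dense_iff_inter_open]
    intro U hU hUne
    by_contra hempty
    push_neg at hempty
    -- D vanishes on the open set ψ '' U
    have hzero : ∀ w ∈ ψ.symm ⁻¹' U, D w = 0 := by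
      intro w hw
      by_contra hne
      have : ψ.symm w ∈ U ∩ {S : Fin N → Fin (k + 1) → (Fin n → ℝ) |
          (Matrix.of fun i j : Fin N => simpIntegral (b j).val (S i)).det ≠ 0} := by
        refine ⟨hw, ?_⟩
        show _ ≠ 0
        rw [hDS (ψ.symm w), ψ.apply_symm_apply]
        exact hne
      rw [hempty] at this
      exact this
    obtain ⟨S0, hS0⟩ := hUne
    have hw0 : ψ S0 ∈ ψ.symm ⁻¹' U := by
      rw [Set.mem_preimage, ψ.symm_apply_apply]
      exact hS0
    have hopen : IsOpen (ψ.symm ⁻¹' U) := hU.preimage ψ.symm.continuous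
    -- identity theorem: D is identically zero
    have hDanal : AnalyticOnNhd ℝ D Set.univ := fun w _ => hPD.analyticAt w
    have hDzero : Set.EqOn D 0 Set.univ := by
      refine hDanal.eqOn_zero_of_preconnected_of_eventuallyEq_zero
        isPreconnected_univ (Set.mem_univ (ψ S0)) ?_
      refine Filter.eventuallyEq_of_mem (hopen.mem_nhds hw0) ?_
      intro w hw
      exact hzero w hw
    -- contradiction with existence of a unisolvent collection
    obtain ⟨S1, hS1⟩ := GUaux.exists_unisolvent b
    exact hS1 (by rw [hDS S1]; exact hDzero (Set.mem_univ (ψ S1)))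
end
end

section
/- (Unisolvence of segmental degrees of freedom / histopolation on the real line.) Let r ≥ 0 and let s_0 = [a_0, b_0], …, s_r = [a_r, b_r] be r+1 intervals in ℝ with a_i < b_i for each i and b_i ≤ a_{i+1} for i = 0,…,r−1 (non-overlapping interiors, ordered left to right). If p is a real polynomial of degree ≤ r with ∫_{a_i}^{b_i} p(x) dx = 0 for every i = 0,…,r, then p = 0. Equivalently, the linear map sending a polynomial of degree ≤ r to its r+1 integrals over the s_i is an isomorphism onto ℝ^{r+1}, so the least squares/histopolation problem on such segments has a unique solution. -/
open MeasureTheory Matrix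

noncomputable section

open MeasureTheory intervalIntegral in
lemma exists_zero_of_integral_eq_zero' (f : ℝ → ℝ) (hf : Continuous f) {A B : ℝ}
    (hAB : A < B) (h0 : ∫ x in A..B, f x = 0) : ∃ x ∈ Set.Ioo A B, f x = 0 := by
  by_contra h
  push_neg at h
  set c := (A + B) / 2 with hc
  have hcmem : c ∈ Set.Ioo A B := ⟨by linarith, by linarith⟩
  have hsub : ∀ x ∈ Set.Ioo A B, Set.uIcc x c ⊆ Set.Ioo A B := fun x hx =>
    Set.OrdConnected.uIcc_subset Set.ordConnected_Ioo hx hcmem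
  rcases lt_or_gt_of_ne (h c hcmem) with hneg | hpos
  · have hall : ∀ x ∈ Set.Ioo A B, f x < 0 := by
      intro x hx
      by_contra hx0
      push_neg at hx0
      have : (0:ℝ) ∈ Set.uIcc (f x) (f c) := Set.mem_uIcc.2 (Or.inr ⟨le_of_lt hneg, hx0⟩)
      obtain ⟨z, hz, hz0⟩ := intermediate_value_uIcc (hf.continuousOn (s := Set.uIcc x c)) this
      exact h z (hsub x hx hz) hz0
    have : 0 < ∫ x in A..B, -f x :=
      intervalIntegral_pos_of_pos_on ((hf.neg).intervalIntegrable _ _)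
        (fun x hx => by simpa using hall x hx) hAB
    rw [intervalIntegral.integral_neg, h0] at this
    simp at this
  · have hall : ∀ x ∈ Set.Ioo A B, 0 < f x := by
      intro x hx
      by_contra hx0
      push_neg at hx0
      have : (0:ℝ) ∈ Set.uIcc (f x) (f c) := Set.mem_uIcc.2 (Or.inl ⟨hx0, le_of_lt hpos⟩)
      obtain ⟨z, hz, hz0⟩ := intermediate_value_uIcc (hf.continuousOn (s := Set.uIcc x c)) this
      exact h z (hsub x hx hz) hz0
    have : 0 < ∫ x in A..B, f x :=
      intervalIntegral_pos_of_pos_on (hf.intervalIntegrable _ _) hall hAB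
    linarith

/-- (Unisolvence of segmental degrees of freedom on the real line.) If
`s₀ = [a₀,b₀], …, s_r = [a_r,b_r]` are `r+1` intervals, nondegenerate and ordered left to
right with non-overlapping interiors, then a polynomial of degree `≤ r` whose integrals over
all the `sᵢ` vanish is zero; equivalently, the map sending a polynomial of degree `≤ r` to
its `r+1` integrals is a bijection onto `ℝ^{r+1}`. -/
theorem histopolation_unisolvent (r : ℕ) (a b : Fin (r + 1) → ℝ)
    (hab : ∀ i, a i < b i) (hord : ∀ i : Fin r, b i.castSucc ≤ a i.succ) :
    (∀ p : Polynomial ℝ, p.natDegree ≤ r →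
      (∀ i, (∫ x in (a i)..(b i), Polynomial.eval x p) = 0) → p = 0) ∧
    Function.Bijective
      (fun p : Polynomial.degreeLE ℝ (r : ℕ) =>
        fun i : Fin (r + 1) => ∫ x in (a i)..(b i), Polynomial.eval x p.val) := by
  -- Part 1
  have part1 : ∀ p : Polynomial ℝ, p.natDegree ≤ r →
      (∀ i, (∫ x in (a i)..(b i), Polynomial.eval x p) = 0) → p = 0 := by
    intro p hdeg hint
    have hroot : ∀ i : Fin (r + 1), ∃ x ∈ Set.Ioo (a i) (b i), p.eval x = 0 := fun i =>
      exists_zero_of_integral_eq_zero' _ p.continuous_aeval (hab i) (hint i)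
    choose x hx hx0 using hroot
    have hxs : StrictMono x := by
      rw [Fin.strictMono_iff_lt_succ]
      intro i
      calc x i.castSucc < b i.castSucc := (hx i.castSucc).2
        _ ≤ a i.succ := hord i
        _ < x i.succ := (hx i.succ).1
    exact p.eq_zero_of_natDegree_lt_card_of_eval_eq_zero hxs.injective hx0
      (by simpa using Nat.lt_succ_of_le hdeg)
  refine ⟨part1, ?_⟩
  -- Part 2
  let L : Polynomial.degreeLE ℝ (r : ℕ) →ₗ[ℝ] (Fin (r + 1) → ℝ) :=
    { toFun := fun p => fun i => ∫ x in (a i)..(b i), Polynomial.eval x p.val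
      map_add' := by
        intro p q
        funext i
        simp only [Submodule.coe_add, Polynomial.eval_add]
        exact intervalIntegral.integral_add
          ((p.1.continuous_aeval).intervalIntegrable _ _)
          ((q.1.continuous_aeval).intervalIntegrable _ _)
      map_smul' := by
        intro c p
        funext i
        simp only [Submodule.coe_smul, Polynomial.eval_smul, smul_eq_mul, RingHom.id_apply,
          Pi.smul_apply]
        exact intervalIntegral.integral_const_mul c _ }
  have hinj : Function.Injective L := by
    rw [← LinearMap.ker_eq_bot, LinearMap.ker_eq_bot']
    intro p hp
    have hmem := p.2
    rw [Polynomial.mem_degreeLE] at hmem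
    have hdeg : p.1.natDegree ≤ r := Polynomial.natDegree_le_iff_degree_le.2 hmem
    have : p.1 = 0 := part1 p.1 hdeg (fun i => congrFun hp i)
    exact Subtype.ext this
  have hrank : Module.finrank ℝ (Polynomial.degreeLE ℝ (r : ℕ)) =
      Module.finrank ℝ (Fin (r + 1) → ℝ) := by
    have e1 : Polynomial.degreeLE ℝ (r : ℕ) ≃ₗ[ℝ] Polynomial.degreeLT ℝ (r + 1) :=
      LinearEquiv.ofEq _ _ (Polynomial.degreeLT_succ_eq_degreeLE).symm
    have e2 := Polynomial.degreeLTEquiv ℝ (r + 1)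
    rw [e1.finrank_eq, e2.finrank_eq]
  have : FiniteDimensional ℝ (Polynomial.degreeLE ℝ (r : ℕ)) := by
    have e1 : Polynomial.degreeLE ℝ (r : ℕ) ≃ₗ[ℝ] Polynomial.degreeLT ℝ (r + 1) :=
      LinearEquiv.ofEq _ _ (Polynomial.degreeLT_succ_eq_degreeLE).symm
    exact Module.Finite.equiv ((Polynomial.degreeLTEquiv ℝ (r + 1)).symm.trans e1.symm)
  exact ⟨hinj, (LinearMap.injective_iff_surjective_of_finrank_eq_finrank hrank).1 hinj⟩
end
end
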